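/- arXiv:0910.4621 — 8 statements merged into one kernel-verified Lean document; each statement's English description precedes it below -/
import Mathlib

section
/- For every c ≥ 0 and every r > 0 there exist unique reals β₁, β₂, β₃ with β₁ < −θ−c < β₂ < 0 < β₃ such that (σ²/2)(z−β₁)(z−β₂)(z−β₃) = (θ+c+z)(ψ_c(z) − r) for all real z ≠ −θ−c. -/
lemma quad_zero (A B C x y w : ℝ) (hxy : x ≠ y) (hyw : y ≠ w) (hxw : x ≠ w)
    (hx : A*x^2+B*x+C = 0) (hy : A*y^2+B*y+C = 0) (hw : A*w^2+B*w+C = 0) :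
    A = 0 ∧ B = 0 ∧ C = 0 := by
  have h1 : (x - y) * (A*(x+y)+B) = 0 := by linear_combination hx - hy
  have h2 : (y - w) * (A*(y+w)+B) = 0 := by linear_combination hy - hw
  have h1' : A*(x+y)+B = 0 := by
    rcases mul_eq_zero.mp h1 with h | h
    · exact absurd (by linarith) hxy
    · exact h
  have h2' : A*(y+w)+B = 0 := by
    rcases mul_eq_zero.mp h2 with h | h
    · exact absurd (by linarith) hyw
    · exact h
  have h3 : A * (x - w) = 0 := by linear_combination h1' - h2'
  have hA : A = 0 := by
    rcases mul_eq_zero.mp h3 with h | h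
    · exact h
    · exact absurd (by linarith) hxw
  have hB : B = 0 := by rw [hA] at h1'; linarith
  have hC : C = 0 := by rw [hA, hB] at hx; linarith
  exact ⟨hA, hB, hC⟩

lemma cubic_factor (k A B C x y w : ℝ) (hxy : x ≠ y) (hyw : y ≠ w) (hxw : x ≠ w)
    (hx : k*x^3+A*x^2+B*x+C = 0) (hy : k*y^3+A*y^2+B*y+C = 0)
    (hw : k*w^3+A*w^2+B*w+C = 0) :
    ∀ z : ℝ, k*z^3+A*z^2+B*z+C = k*(z-x)*(z-y)*(z-w) := by
  have hx' : (A + k*(x+y+w))*x^2 + (B - k*(x*y+x*w+y*w))*x + (C + k*(x*y*w)) = 0 := by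
    linear_combination hx
  have hy' : (A + k*(x+y+w))*y^2 + (B - k*(x*y+x*w+y*w))*y + (C + k*(x*y*w)) = 0 := by
    linear_combination hy
  have hw' : (A + k*(x+y+w))*w^2 + (B - k*(x*y+x*w+y*w))*w + (C + k*(x*y*w)) = 0 := by
    linear_combination hw
  obtain ⟨hA, hB, hC⟩ := quad_zero _ _ _ x y w hxy hyw hxw hx' hy' hw'
  intro z
  linear_combination z^2 * hA + z * hB + hC

lemma cubic_large (k A B C z : ℝ) (hk : 0 < k) (hz1 : 1 ≤ z)
    (hz2 : (|A|+|B|+|C|+1)/k ≤ z) : 0 < k*z^3+A*z^2+B*z+C := by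
  have h : |A|+|B|+|C|+1 ≤ k*z := by
    rw [div_le_iff₀ hk] at hz2; linarith [hz2]
  have hA := neg_abs_le A
  have hB := neg_abs_le B
  have hC := neg_abs_le C
  have hz0 : (0:ℝ) < z := by linarith
  have hzz : z ≤ z^2 := by nlinarith
  have h1 : (|A|+|B|+|C|+1) * z^2 ≤ k*z*z^2 := by nlinarith [sq_nonneg z]
  have h2 : -|A| * z^2 ≤ A * z^2 := by nlinarith [sq_nonneg z]
  have h3 : -|B| * z ≤ B * z := by nlinarith
  have h4 : 0 ≤ |B| * (z^2 - z) := mul_nonneg (abs_nonneg B) (by linarith)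
  have h5 : 0 ≤ |C| * (z^2 - 1) := mul_nonneg (abs_nonneg C) (by nlinarith)
  nlinarith [sq_nonneg z]

set_option maxHeartbeats 1000000 in
/-- For every `c ≥ 0` and every `r > 0` there exist unique reals
`β₁ < −θ−c < β₂ < 0 < β₃` with
`(σ²/2)(z−β₁)(z−β₂)(z−β₃) = (θ+c+z)(ψ_c(z) − r)` for all `z ≠ −θ−c`. -/
theorem stmt_1
    (σ lam θ μ : ℝ) (hσ : 0 < σ) (hlam : 0 < lam) (hθ : 0 < θ)
    (ψ : ℝ → ℝ)
    (hψ : ∀ z : ℝ, z ≠ -θ → ψ z = σ^2/2 * z^2 + μ * z + lam * (θ/(θ+z) - 1))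
    (c : ℝ) (hc : 0 ≤ c) (r : ℝ) (hr : 0 < r) :
    ∃! b : ℝ × ℝ × ℝ,
      b.1 < -θ - c ∧ -θ - c < b.2.1 ∧ b.2.1 < 0 ∧ 0 < b.2.2 ∧
      ∀ z : ℝ, z ≠ -θ - c →
        σ^2/2 * (z - b.1) * (z - b.2.1) * (z - b.2.2)
          = (θ + c + z) * ((ψ (z + c) - ψ c) - r) := by
  set k := σ^2/2 with hk_def
  have hk : 0 < k := by positivity
  set t := θ + c with ht_def
  have ht : 0 < t := by simp only [ht_def]; linarith
  have hmt : -θ - c = -t := by simp only [ht_def]; ring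
  have hψc : ψ c = k*c^2 + μ*c + lam*(θ/t - 1) := by
    rw [hψ c (by intro h; rw [h] at hc; linarith)]
  set s := ψ c + r + lam with hs_def
  set A := 2*k*c + μ + k*t with hA_def
  set B := k*c^2 + μ*c - s + 2*k*c*t + μ*t with hB_def
  set C := t*(k*c^2 + μ*c - s) + lam*θ with hC_def
  set P : ℝ → ℝ := fun z => k*z^3 + A*z^2 + B*z + C with hP
  have hform : ∀ z : ℝ, P z = (t + z)*(k*(z+c)^2 + μ*(z+c) - s) + lam*θ := by
    intro z
    simp only [hP, hA_def, hB_def, hC_def]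
    ring
  have hPa : P (-t) = lam*θ := by rw [hform]; ring
  have hP0 : P 0 = -(t*r) := by
    rw [hform]
    rw [hs_def, hψc]
    field_simp
    ring
  have hPz : ∀ z : ℝ, z ≠ -t → P z = (t + z)*((ψ (z + c) - ψ c) - r) := by
    intro z hz
    have htz : t + z ≠ 0 := by
      intro h; apply hz; linarith
    have h1 : ψ (z + c) = k*(z+c)^2 + μ*(z+c) + lam*(θ/(t+z) - 1) := by
      rw [hψ (z + c) (by intro h; apply hz; simp only [ht_def]; linarith),
        show θ + (z + c) = t + z by simp only [ht_def]; ring]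
    rw [hform, h1, hs_def]
    field_simp
    ring
  have hcont : Continuous P := by fun_prop
  -- large positive point
  set N := max 1 ((|A|+|B|+|C|+1)/k) with hN_def
  have hPN : 0 < P N := by
    have := cubic_large k A B C N hk (le_max_left _ _) (le_max_right _ _)
    simpa [hP] using this
  -- large negative point
  set M := max (max 1 ((|(-A)|+|B|+|(-C)|+1)/k)) (t+1) with hM_def
  have hM1 : 1 ≤ M := le_trans (le_max_left _ _) (le_max_left _ _)
  have hM2 : (|(-A)|+|B|+|(-C)|+1)/k ≤ M := le_trans (le_max_right _ _) (le_max_left _ _)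
  have hMt : t + 1 ≤ M := le_max_right _ _
  have hPm : P (-M) < 0 := by
    have h := cubic_large k (-A) B (-C) M hk hM1 hM2
    have : P (-M) = -(k*M^3+(-A)*M^2+B*M+(-C)) := by simp only [hP]; ring
    rw [this]; linarith
  have hlamθ : 0 < lam * θ := mul_pos hlam hθ
  have hP0' : P 0 < 0 := by rw [hP0]; nlinarith [mul_pos ht hr]
  have hPa' : 0 < P (-t) := by rw [hPa]; exact hlamθ
  have hmM : -M < -t := by linarith
  -- β₁ ∈ (-M, -t)
  obtain ⟨β₁, hβ₁mem, hβ₁0⟩ := intermediate_value_Ioo (by linarith : -M ≤ -t)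
    hcont.continuousOn (Set.mem_Ioo.mpr ⟨hPm, hPa'⟩)
  -- β₂ ∈ (-t, 0)
  obtain ⟨β₂, hβ₂mem, hβ₂0⟩ := intermediate_value_Ioo' (by linarith : -t ≤ 0)
    hcont.continuousOn (Set.mem_Ioo.mpr ⟨hP0', hPa'⟩)
  -- β₃ ∈ (0, N)
  have hN0 : (0:ℝ) ≤ N := le_trans zero_le_one (le_max_left _ _)
  obtain ⟨β₃, hβ₃mem, hβ₃0⟩ := intermediate_value_Ioo hN0
    hcont.continuousOn (Set.mem_Ioo.mpr ⟨hP0', hPN⟩)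
  obtain ⟨_, hβ₁t⟩ := hβ₁mem
  obtain ⟨hβ₂t, hβ₂n⟩ := hβ₂mem
  obtain ⟨hβ₃p, _⟩ := hβ₃mem
  have h12 : β₁ ≠ β₂ := by intro h; rw [h] at hβ₁t; linarith
  have h23 : β₂ ≠ β₃ := by intro h; rw [h] at hβ₂n; linarith
  have h13 : β₁ ≠ β₃ := by intro h; rw [h] at hβ₁t; linarith
  have hβ₁' : k*β₁^3+A*β₁^2+B*β₁+C = 0 := by simpa [hP] using hβ₁0
  have hβ₂' : k*β₂^3+A*β₂^2+B*β₂+C = 0 := by simpa [hP] using hβ₂0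
  have hβ₃' : k*β₃^3+A*β₃^2+B*β₃+C = 0 := by simpa [hP] using hβ₃0
  have hfac := cubic_factor k A B C β₁ β₂ β₃ h12 h23 h13 hβ₁' hβ₂' hβ₃'
  have hroot : ∀ u : ℝ, P u = 0 → u = β₁ ∨ u = β₂ ∨ u = β₃ := by
    intro u hu
    have hu' : k*(u-β₁)*(u-β₂)*(u-β₃) = 0 := by
      rw [← hfac u]; simpa [hP] using hu
    rcases mul_eq_zero.mp hu' with h | h
    · rcases mul_eq_zero.mp h with h | h
      · rcases mul_eq_zero.mp h with h | h
        · exact absurd h (ne_of_gt hk)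
        · exact Or.inl (by linarith [sub_eq_zero.mp h])
      · exact Or.inr (Or.inl (sub_eq_zero.mp h))
    · exact Or.inr (Or.inr (sub_eq_zero.mp h))
  refine ⟨(β₁, β₂, β₃), ⟨by rw [hmt]; exact hβ₁t, by rw [hmt]; exact hβ₂t, hβ₂n, hβ₃p, ?_⟩, ?_⟩
  · intro z hz
    rw [hmt] at hz
    have := hPz z hz
    calc k * (z - β₁) * (z - β₂) * (z - β₃)
        = k*z^3 + A*z^2 + B*z + C := (hfac z).symm
      _ = P z := by simp [hP]
      _ = (t + z) * (ψ (z + c) - ψ c - r) := hPz z hz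
  · rintro ⟨x, y, w⟩ ⟨h1, h2, h3, h4, heq⟩
    rw [hmt] at h1 h2
    simp only at h1 h2 h3 h4 heq
    have hxr : P x = 0 := by
      rw [hPz x (by intro h; rw [h] at h1; linarith)]
      rw [← heq x (by rw [hmt]; intro h; rw [h] at h1; linarith)]
      ring
    have hyr : P y = 0 := by
      rw [hPz y (by intro h; rw [h] at h2; linarith)]
      rw [← heq y (by rw [hmt]; intro h; rw [h] at h2; linarith)]
      ring
    have hwr : P w = 0 := by
      have hw : w ≠ -t := by intro h; rw [h] at h4; linarith
      rw [hPz w hw]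
      rw [← heq w (by rw [hmt]; exact hw)]
      ring
    have hx : x = β₁ := by
      rcases hroot x hxr with h | h | h
      · exact h
      · rw [h] at h1; linarith
      · rw [h] at h1; linarith
    have hy : y = β₂ := by
      rcases hroot y hyr with h | h | h
      · rw [h] at h2; linarith
      · exact h
      · rw [h] at h3; linarith
    have hw : w = β₃ := by
      rcases hroot w hwr with h | h | h
      · rw [h] at h4; linarith
      · rw [h] at h4; linarith
      · exact h
    simp [hx, hy, hw]
end

section
/- For every c ≥ 0 there exist reals β₁, β₂, β₃ with β₁ < −θ−c < β₂ ≤ 0 ≤ β₃ such that (σ²/2)(z−β₁)(z−β₂)(z−β₃) = (θ+c+z)·ψ_c(z) for all real z ≠ −θ−c; moreover β₂ < 0 = β₃ if ψ_c′(0) > 0, β₂ = 0 < β₃ if ψ_c′(0) < 0, and β₂ = β₃ = 0 if ψ_c′(0) = 0. -/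
lemma stmt_2_aux (a θ c z lam μ : ℝ) (h1 : θ + (z + c) ≠ 0) (h2 : θ + c ≠ 0) :
    (a*z^2 + (a*(θ+c) + 2*a*c + μ)*z + ((θ+c)*(2*a*c+μ) - lam*θ/(θ+c)))*z
      = (θ+c+z) * ((a*(z+c)^2 + μ*(z+c) + lam*(θ/(θ+(z+c)) - 1))
          - (a*c^2 + μ*c + lam*(θ/(θ+c) - 1))) := by
  have h3 : θ + c + z ≠ 0 := fun h => h1 (by linarith)
  field_simp
  ring

set_option maxHeartbeats 1000000 in
/-- For every `c ≥ 0` there exist reals `β₁ < −θ−c < β₂ ≤ 0 ≤ β₃` such that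
`(σ²/2)(z−β₁)(z−β₂)(z−β₃) = (θ+c+z)·ψ_c(z)` for all `z ≠ −θ−c`; moreover
`β₂ < 0 = β₃` if `ψ_c′(0) > 0`, `β₂ = 0 < β₃` if `ψ_c′(0) < 0`, and
`β₂ = β₃ = 0` if `ψ_c′(0) = 0`. -/
theorem stmt_2
    (σ lam θ μ : ℝ) (hσ : 0 < σ) (hlam : 0 < lam) (hθ : 0 < θ)
    (ψ : ℝ → ℝ)
    (hψ : ∀ z : ℝ, z ≠ -θ → ψ z = σ^2/2 * z^2 + μ * z + lam * (θ/(θ+z) - 1))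
    (c : ℝ) (hc : 0 ≤ c) :
    ∃ b₁ b₂ b₃ : ℝ,
      b₁ < -θ - c ∧ -θ - c < b₂ ∧ b₂ ≤ 0 ∧ 0 ≤ b₃ ∧
      (∀ z : ℝ, z ≠ -θ - c →
        σ^2/2 * (z - b₁) * (z - b₂) * (z - b₃) = (θ + c + z) * (ψ (z + c) - ψ c)) ∧
      (0 < deriv (fun z => ψ (z + c) - ψ c) 0 → b₂ < 0 ∧ b₃ = 0) ∧
      (deriv (fun z => ψ (z + c) - ψ c) 0 < 0 → b₂ = 0 ∧ 0 < b₃) ∧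
      (deriv (fun z => ψ (z + c) - ψ c) 0 = 0 → b₂ = 0 ∧ b₃ = 0) := by
  obtain ⟨a, ha'⟩ : ∃ a : ℝ, a = σ^2/2 := ⟨_, rfl⟩
  have ha : 0 < a := by rw [ha']; positivity
  obtain ⟨T, hT'⟩ : ∃ T : ℝ, T = θ + c := ⟨_, rfl⟩
  have hT : 0 < T := by rw [hT']; linarith
  have hTne : T ≠ 0 := hT.ne'
  obtain ⟨b, hb'⟩ : ∃ b : ℝ, b = a*T + 2*a*c + μ := ⟨_, rfl⟩
  obtain ⟨k, hk'⟩ : ∃ k : ℝ, k = T*(2*a*c+μ) - lam*θ/T := ⟨_, rfl⟩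
  have hlt : 0 < lam*θ/T := div_pos (mul_pos hlam hθ) hT
  have hPT : a*T^2 - b*T + k = -(lam*θ/T) := by rw [hb', hk']; ring
  have hDpos : 0 < b^2 - 4*a*k := by nlinarith [sq_nonneg (2*a*T - b), mul_pos ha hlt]
  -- roots of the quadratic
  obtain ⟨r₁, r₂, hr12, hquad⟩ : ∃ r₁ r₂ : ℝ, r₁ ≤ r₂ ∧
      ∀ z : ℝ, a*(z-r₁)*(z-r₂) = a*z^2 + b*z + k := by
    refine ⟨(-b - Real.sqrt (b^2-4*a*k))/(2*a), (-b + Real.sqrt (b^2-4*a*k))/(2*a), ?_, ?_⟩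
    · apply div_le_div_of_nonneg_right ?_ (by linarith)
      have := Real.sqrt_nonneg (b^2-4*a*k); linarith
    · intro z
      have hs2 : Real.sqrt (b^2-4*a*k) ^ 2 = b^2-4*a*k := Real.sq_sqrt hDpos.le
      field_simp
      rw [show b^2 - a*4*k = b^2-4*a*k by ring]
      nlinarith [hs2]
  -- r₁ < -T < r₂
  have e1 : a * (-T - r₁) * (-T - r₂) = -(lam*θ/T) := by
    linear_combination hquad (-T) + hPT
  have hPTfact : a * (-T - r₁) * (-T - r₂) < 0 := by rw [e1]; linarith
  have hr1T : r₁ < -T := by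
    by_contra h; push_neg at h
    have h2 : (0:ℝ) ≤ (-T - r₁) * (-T - r₂) := by nlinarith
    nlinarith
  have hr2T : -T < r₂ := by
    by_contra h; push_neg at h
    have h2 : (0:ℝ) ≤ (-T - r₁) * (-T - r₂) := by nlinarith
    nlinarith
  have hr1neg : r₁ < 0 := by linarith
  have hP0 : a*r₁*r₂ = k := by linear_combination hquad 0
  -- derivative
  have hcne : c ≠ -θ := by linarith
  obtain ⟨d, hd'⟩ : ∃ d : ℝ, d = 2*a*c + μ - lam*θ/T^2 := ⟨_, rfl⟩
  have hderiv : deriv (fun z => ψ (z + c) - ψ c) 0 = d := by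
    have hEq : (fun z => ψ (z + c) - ψ c) =ᶠ[nhds (0:ℝ)]
        (fun z => a*(z+c)^2 + μ*(z+c) + lam*(θ/(T+z) - 1) - ψ c) := by
      have hmem : Set.Ioi (-T) ∈ nhds (0:ℝ) := Ioi_mem_nhds (by linarith)
      filter_upwards [hmem] with z hz
      have hz' : z + c ≠ -θ := by
        simp only [Set.mem_Ioi] at hz; intro h; rw [hT'] at hz; linarith
      rw [hψ (z+c) hz', ha', hT']
      ring_nf
    rw [hEq.deriv_eq]
    have h1 : HasDerivAt (fun z : ℝ => z + c) 1 0 := (hasDerivAt_id 0).add_const c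
    have hsq : HasDerivAt (fun z : ℝ => a*(z+c)^2) (a*((2:ℕ)*(0+c)^(2-1)*1)) 0 :=
      (h1.pow 2).const_mul a
    have hmu : HasDerivAt (fun z : ℝ => μ*(z+c)) (μ*1) 0 := h1.const_mul μ
    have hden : HasDerivAt (fun z : ℝ => T+z) (0+1) 0 :=
      (hasDerivAt_const 0 T).add (hasDerivAt_id 0)
    have hdiv : HasDerivAt (fun z : ℝ => θ/(T+z)) ((0*(T+0) - θ*(0+1))/(T+0)^2) 0 :=
      (hasDerivAt_const 0 θ).div hden (by simpa using hTne)
    have hfrac := (hdiv.sub_const 1).const_mul lam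
    have hfin := (((hsq.add hmu).add hfrac).sub_const (ψ c))
    rw [(show HasDerivAt (fun z => a*(z+c)^2 + μ*(z+c) + lam*(θ/(T+z) - 1) - ψ c) _ 0 from hfin).deriv, hd']
    push_cast
    field_simp
    ring
  have hdk : T * d = k := by rw [hd', hk']; field_simp
  have hsign1 : 0 < d → r₂ < 0 := by
    intro h; by_contra hcon; push_neg at hcon
    have h2 : 0 ≤ a * r₂ * (-r₁) :=
      mul_nonneg (mul_nonneg ha.le hcon) (by linarith)
    have h3 : a * r₂ * (-r₁) = -(T*d) := by linear_combination hdk - hP0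
    have h4 : 0 < T*d := mul_pos hT h
    linarith
  have hsign2 : d < 0 → 0 < r₂ := by
    intro h; by_contra hcon; push_neg at hcon
    have h2 : 0 ≤ a * (-r₁) * (-r₂) :=
      mul_nonneg (mul_nonneg ha.le (by linarith)) (by linarith)
    have h3 : a * (-r₁) * (-r₂) = T*d := by linear_combination hP0 - hdk
    have h4 : T*d < 0 := mul_neg_of_pos_of_neg hT h
    linarith
  have hsign3 : d = 0 → r₂ = 0 := by
    intro h
    have hk0 : a*r₁*r₂ = 0 := by rw [hP0, ← hdk, h]; ring
    have har1 : a * r₁ ≠ 0 := (mul_neg_of_pos_of_neg ha hr1neg).ne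
    rcases mul_eq_zero.mp hk0 with h' | h'
    · exact absurd h' har1
    · exact h'
  refine ⟨r₁, min r₂ 0, max r₂ 0, ?_, ?_, min_le_right _ _, le_max_right _ _, ?_, ?_, ?_, ?_⟩
  · rw [hT'] at hr1T; linarith
  · have h2 : -T < min r₂ 0 := lt_min hr2T (by linarith)
    rw [hT'] at h2; linarith
  · intro z hz
    have hzT : z ≠ -T := by rw [hT']; intro h; apply hz; rw [h]; ring
    have hz' : z + c ≠ -θ := by intro h; apply hzT; rw [hT']; linarith
    have hTz : θ + c + z ≠ 0 := by rw [← hT']; intro h; apply hzT; linarith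
    have hmm : (z - min r₂ 0) * (z - max r₂ 0) = (z - r₂) * z := by
      rcases le_total r₂ 0 with h | h
      · rw [min_eq_left h, max_eq_right h]; ring
      · rw [min_eq_right h, max_eq_left h]; ring
    have key : a*(z-r₁)*(z-r₂)*z = (θ+c+z)*(ψ (z+c) - ψ c) := by
      rw [hψ (z+c) hz', hψ c hcne]
      have h1 : a*(z-r₁)*(z-r₂)*z = (a*z^2 + b*z + k)*z := by rw [hquad z]
      have hθc2 : θ + (z + c) ≠ 0 := by intro h; apply hTz; linarith
      have hθc3 : θ + c ≠ 0 := by rw [← hT']; exact hTne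
      rw [h1, hb', hk', ← ha', hT']
      exact stmt_2_aux a θ c z lam μ hθc2 hθc3
    calc σ^2/2 * (z - r₁) * (z - min r₂ 0) * (z - max r₂ 0)
        = a*(z-r₁)*((z - min r₂ 0) * (z - max r₂ 0)) := by rw [ha']; ring
      _ = a*(z-r₁)*((z-r₂)*z) := by rw [hmm]
      _ = (θ + c + z) * (ψ (z + c) - ψ c) := by rw [← key]; ring
  · intro h
    rw [hderiv] at h
    have h2 := hsign1 h
    exact ⟨min_lt_of_left_lt h2, max_eq_right h2.le⟩
  · intro h
    rw [hderiv] at h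
    have h2 := hsign2 h
    exact ⟨min_eq_right h2.le, lt_max_of_lt_left h2⟩
  · intro h
    rw [hderiv] at h
    have h2 := hsign3 h
    simp [h2]
end

section
/- Assume q > 0 and μ = q − σ²/2 + λ/(θ+1), so that ψ(1) = q. Set A = θ/2 + q/σ² + λ/(σ²(θ+1)). Then A² > 2qθ/σ², and, defining β₁ = −A − √(A² − 2qθ/σ²), β₂ = −A + √(A² − 2qθ/σ²) and β₃ = 1, one has β₁ < −θ < β₂ < 0 < β₃ and (σ²/2)(z−β₁)(z−β₂)(z−1) = (θ+z)(ψ(z) − q) for all real z ≠ −θ. -/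
set_option maxHeartbeats 1000000


/-- Assume `q > 0` and `μ = q − σ²/2 + λ/(θ+1)` (so `ψ(1) = q`). With
`A = θ/2 + q/σ² + λ/(σ²(θ+1))` one has `A² > 2qθ/σ²`, and setting
`β₁ = −A − √(A² − 2qθ/σ²)`, `β₂ = −A + √(A² − 2qθ/σ²)`, `β₃ = 1`, one has
`β₁ < −θ < β₂ < 0 < β₃` and
`(σ²/2)(z−β₁)(z−β₂)(z−1) = (θ+z)(ψ(z) − q)` for all `z ≠ −θ`. -/
theorem stmt_3
    (σ lam θ μ q : ℝ) (hσ : 0 < σ) (hlam : 0 < lam) (hθ : 0 < θ) (hq : 0 < q)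
    (hμ : μ = q - σ^2/2 + lam/(θ+1))
    (ψ : ℝ → ℝ)
    (hψ : ∀ z : ℝ, z ≠ -θ → ψ z = σ^2/2 * z^2 + μ * z + lam * (θ/(θ+z) - 1))
    (A : ℝ) (hA : A = θ/2 + q/σ^2 + lam/(σ^2 * (θ+1)))
    (β₁ β₂ β₃ : ℝ)
    (hβ₁ : β₁ = -A - Real.sqrt (A^2 - 2*q*θ/σ^2))
    (hβ₂ : β₂ = -A + Real.sqrt (A^2 - 2*q*θ/σ^2))
    (hβ₃ : β₃ = 1) :
    2*q*θ/σ^2 < A^2 ∧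
    β₁ < -θ ∧ -θ < β₂ ∧ β₂ < 0 ∧ 0 < β₃ ∧
    ∀ z : ℝ, z ≠ -θ →
      σ^2/2 * (z - β₁) * (z - β₂) * (z - 1) = (θ + z) * (ψ z - q) := by
  have hσ2 : (0:ℝ) < σ^2 := by positivity
  have hθ1 : (0:ℝ) < θ + 1 := by linarith
  have hL : 0 < lam / (σ^2 * (θ+1)) := by positivity
  have hqs : 0 < q / σ^2 := by positivity
  have he1 : 2*q*θ/σ^2 = 2*θ*(q/σ^2) := by ring
  have hD : 2*q*θ/σ^2 < A^2 := by
    rw [he1, hA]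
    nlinarith [sq_nonneg (θ/2 - q/σ^2), mul_pos hL hqs, mul_pos hL hθ, sq_nonneg (lam/(σ^2*(θ+1)))]
  set s := Real.sqrt (A^2 - 2*q*θ/σ^2) with hs
  clear_value s
  have hs2 : s^2 = A^2 - 2*q*θ/σ^2 := by
    rw [hs]; exact Real.sq_sqrt (by linarith)
  have hspos : 0 < s := by
    rw [hs]; exact Real.sqrt_pos.mpr (by linarith)
  have hkey : (A - θ)^2 < s^2 := by
    rw [hs2, he1, hA]
    nlinarith [mul_pos hL hθ, mul_pos hqs hθ, sq_nonneg (θ/2 - q/σ^2)]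
  have hApos : 0 < A := by rw [hA]; positivity
  refine ⟨hD, ?_, ?_, ?_, by rw [hβ₃]; norm_num, ?_⟩
  · rw [hβ₁]; nlinarith [hspos, hkey]
  · rw [hβ₂]; nlinarith [hspos, hkey]
  · rw [hβ₂]
    nlinarith [hs2, hspos, mul_pos hq hθ]
  · intro z hz
    have hz' : θ + z ≠ 0 := fun h => hz (by linarith)
    have hθ1' : (θ:ℝ) + 1 ≠ 0 := ne_of_gt hθ1
    have hσ' : σ ≠ 0 := ne_of_gt hσ
    have hprod : (z - β₁) * (z - β₂) = z^2 + 2*A*z + 2*q*θ/σ^2 := by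
      rw [hβ₁, hβ₂]; linear_combination -hs2
    rw [show σ^2/2 * (z - β₁) * (z - β₂) * (z - 1)
        = σ^2/2 * ((z - β₁) * (z - β₂)) * (z - 1) by ring, hprod,
      hψ z hz, hμ, hA]
    field_simp
    ring
end

section
/- For every real β > β₃ the scale function W^{(r)}_c(x) = Σ_{i=1}^3 C_i e^{β_i x} satisfies the Laplace transform identity ∫₀^∞ e^{−βx} Σ_{i=1}^3 C_i e^{β_i x} dx = 1/(ψ_c(β) − r). -/
open MeasureTheory

lemma exp_integrable_neg' {a : ℝ} (ha : a < 0) :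
    MeasureTheory.IntegrableOn (fun x : ℝ => Real.exp (a * x)) (Set.Ioi 0) := by
  have h := exp_neg_integrableOn_Ioi 0 (neg_pos.mpr ha)
  simpa using h

lemma exp_integral_neg' {a : ℝ} (ha : a < 0) :
    ∫ x in Set.Ioi (0:ℝ), Real.exp (a * x) = -(1 / a) := by
  have ha0 : a ≠ 0 := ha.ne
  have hd : ∀ x ∈ Set.Ici (0:ℝ),
      HasDerivAt (fun t => Real.exp (a * t) / a) (Real.exp (a * x)) x := by
    intro x _
    have h1 : HasDerivAt (fun t : ℝ => a * t) a x := by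
      simpa using (hasDerivAt_id x).const_mul a
    have h2 := h1.exp.div_const a
    simpa [mul_div_assoc, mul_div_cancel_right₀ _ ha0] using h2
  have hlim : Filter.Tendsto (fun t : ℝ => Real.exp (a * t) / a) Filter.atTop (nhds (0 / a)) := by
    apply Filter.Tendsto.div_const
    have h3 : Filter.Tendsto (fun t : ℝ => a * t) Filter.atTop Filter.atBot := by
      have h5 := Filter.Tendsto.const_mul_atTop (neg_pos.mpr ha) (Filter.tendsto_id (α := ℝ))
      have h6 := Filter.tendsto_neg_atTop_atBot.comp h5
      apply h6.congr
      intro x; simp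
    exact Real.tendsto_exp_atBot.comp h3
  have := integral_Ioi_of_hasDerivAt_of_tendsto' hd (exp_integrable_neg' ha) hlim
  simpa using this

set_option maxHeartbeats 2000000 in
lemma stmt5_alg (σ t β β₁ β₂ β₃ : ℝ) (h7 : σ^2 ≠ 0)
    (h1 : β - β₁ ≠ 0) (h2 : β - β₂ ≠ 0) (h3 : β - β₃ ≠ 0)
    (h4 : β₂ - β₁ ≠ 0) (h5 : β₃ - β₁ ≠ 0) (h6 : β₃ - β₂ ≠ 0) (h8 : t + β ≠ 0) :
    2*(t+β₁)/(σ^2*((β₂-β₁)*(β₃-β₁)))/(β-β₁) + 2*(t+β₂)/(σ^2*((β₁-β₂)*(β₃-β₂)))/(β-β₂)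
      + 2*(t+β₃)/(σ^2*((β₁-β₃)*(β₂-β₃)))/(β-β₃)
      = 1/(σ^2/2*(β-β₁)*(β-β₂)*(β-β₃)/(t+β)) := by
  have h4' : β₁ - β₂ ≠ 0 := fun h => h4 (by linarith [sub_eq_zero.mp h])
  have h5' : β₁ - β₃ ≠ 0 := fun h => h5 (by linarith [sub_eq_zero.mp h])
  have h6' : β₂ - β₃ ≠ 0 := fun h => h6 (by linarith [sub_eq_zero.mp h])
  field_simp
  ring

set_option maxHeartbeats 1000000 in
/-- Laplace transform of the scale function: for every `β > β₃`,
`∫₀^∞ e^{−βx} Σ_{i=1}^3 C_i e^{β_i x} dx = 1/(ψ_c(β) − r)`. -/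
theorem stmt_5
    (σ lam θ μ : ℝ) (hσ : 0 < σ) (hlam : 0 < lam) (hθ : 0 < θ)
    (ψ : ℝ → ℝ)
    (hψ : ∀ z : ℝ, z ≠ -θ → ψ z = σ^2/2 * z^2 + μ * z + lam * (θ/(θ+z) - 1))
    (c r : ℝ) (hc : 0 ≤ c) (hr : 0 < r)
    (β₁ β₂ β₃ : ℝ) (h12 : β₁ < β₂) (h23 : β₂ < β₃)
    (hcubic : ∀ z : ℝ, z ≠ -θ - c →
      σ^2/2 * (z - β₁) * (z - β₂) * (z - β₃)
        = (θ + c + z) * ((ψ (z + c) - ψ c) - r))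
    (C₁ C₂ C₃ : ℝ)
    (hC₁ : C₁ = 2 * (θ + c + β₁) / (σ^2 * ((β₂ - β₁) * (β₃ - β₁))))
    (hC₂ : C₂ = 2 * (θ + c + β₂) / (σ^2 * ((β₁ - β₂) * (β₃ - β₂))))
    (hC₃ : C₃ = 2 * (θ + c + β₃) / (σ^2 * ((β₁ - β₃) * (β₂ - β₃))))
    (β : ℝ) (hβ : β₃ < β) :
    ∫ x in Set.Ioi (0:ℝ),
        Real.exp (-β * x) *
          (C₁ * Real.exp (β₁ * x) + C₂ * Real.exp (β₂ * x) + C₃ * Real.exp (β₃ * x))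
      = 1 / ((ψ (β + c) - ψ c) - r) := by
  have htpos : 0 < θ + c := by linarith
  have hcθ : c ≠ -θ := by linarith
  -- polynomial identity valid for all z
  have hpoly : ∀ z : ℝ, σ^2/2 * (z - β₁) * (z - β₂) * (z - β₃)
      = (θ + c + z) * (σ^2/2 * z^2 + (σ^2 * c + μ) * z - r) - (lam*θ/(θ+c)) * z := by
    have heq : Set.EqOn (fun z => σ^2/2 * (z - β₁) * (z - β₂) * (z - β₃))
        (fun z => (θ + c + z) * (σ^2/2 * z^2 + (σ^2 * c + μ) * z - r) - (lam*θ/(θ+c)) * z)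
        {-(θ+c)}ᶜ := by
      intro z hz
      simp only [Set.mem_compl_iff, Set.mem_singleton_iff] at hz
      have hz2 : θ + c + z ≠ 0 := fun h => hz (by linarith)
      have hz' : z ≠ -θ - c := fun h => hz (by rw [h]; ring)
      have h1 := hcubic z hz'
      rw [hψ (z+c) (fun h => hz (by linarith)), hψ c hcθ] at h1
      have hzc : θ + (z + c) ≠ 0 := fun h => hz (by linarith)
      have hθc : θ + c ≠ 0 := ne_of_gt htpos
      dsimp only
      rw [h1]
      field_simp
      ring
    have hc1 : Continuous fun z : ℝ => σ^2/2 * (z - β₁) * (z - β₂) * (z - β₃) := by continuity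
    have hc2 : Continuous fun z : ℝ =>
        (θ + c + z) * (σ^2/2 * z^2 + (σ^2 * c + μ) * z - r) - (lam*θ/(θ+c)) * z := by continuity
    have := hc1.ext_on (dense_compl_singleton (-(θ+c))) hc2 heq
    intro z; exact congrFun this z
  -- β₃ > -(θ+c)
  have hβ₃ : -(θ+c) < β₃ := by
    by_contra hcon
    push_neg at hcon
    have h0 := hpoly 0
    have hb3 : β₃ < 0 := by linarith
    have hb2 : β₂ < 0 := by linarith
    have hb1 : β₁ < 0 := by linarith
    have hσ2 : 0 < σ^2/2 := by positivity
    nlinarith [mul_pos (mul_pos (neg_pos.mpr hb1) (neg_pos.mpr hb2)) (neg_pos.mpr hb3),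
      mul_pos htpos hr]
  have hβt : 0 < θ + c + β := by linarith
  have hβ1 : β₁ < β := by linarith
  have hβ2 : β₂ < β := by linarith
  have hβ3 : β₃ < β := hβ
  have hkey := hcubic β (by intro h; rw [h] at hβ; linarith)
  set D := ψ (β + c) - ψ c - r with hD
  have hσ2 : (0:ℝ) < σ^2/2 := by positivity
  have hprodpos : 0 < σ^2/2 * (β - β₁) * (β - β₂) * (β - β₃) :=
    mul_pos (mul_pos (mul_pos hσ2 (by linarith)) (by linarith)) (by linarith)
  have hDpos : 0 < D := by
    nlinarith
  have hDval : D = σ^2/2 * (β - β₁) * (β - β₂) * (β - β₃) / (θ + c + β) := by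
    rw [eq_div_iff (ne_of_gt hβt)]
    linear_combination -hkey
  -- compute the integral
  have hint : ∀ b C : ℝ, b < β →
      ∫ x in Set.Ioi (0:ℝ), C * Real.exp ((b - β) * x) = C / (β - b) := by
    intro b C hb
    rw [MeasureTheory.integral_const_mul, exp_integral_neg' (by linarith : b - β < 0)]
    have hne : β - b ≠ 0 := by intro h; linarith [sub_eq_zero.mp h]
    have hne' : b - β ≠ 0 := by intro h; linarith [sub_eq_zero.mp h]
    field_simp
    ring
  have hintg : ∀ b : ℝ, b < β →
      MeasureTheory.IntegrableOn (fun x : ℝ => Real.exp ((b - β) * x)) (Set.Ioi 0) :=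
    fun b hb => exp_integrable_neg' (by linarith : b - β < 0)
  have hrw : ∀ x : ℝ, Real.exp (-β * x) *
        (C₁ * Real.exp (β₁ * x) + C₂ * Real.exp (β₂ * x) + C₃ * Real.exp (β₃ * x))
      = C₁ * Real.exp ((β₁ - β) * x) + C₂ * Real.exp ((β₂ - β) * x)
        + C₃ * Real.exp ((β₃ - β) * x) := by
    intro x
    rw [show (β₁ - β) * x = -β * x + β₁ * x by ring, show (β₂ - β) * x = -β * x + β₂ * x by ring,
      show (β₃ - β) * x = -β * x + β₃ * x by ring, Real.exp_add, Real.exp_add, Real.exp_add]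
    ring
  rw [MeasureTheory.setIntegral_congr_fun measurableSet_Ioi (fun x _ => hrw x)]
  have I1 : IntegrableOn (fun x : ℝ => C₁ * Real.exp ((β₁ - β) * x)) (Set.Ioi 0) :=
    (hintg β₁ hβ1).const_mul C₁
  have I2 : IntegrableOn (fun x : ℝ => C₂ * Real.exp ((β₂ - β) * x)) (Set.Ioi 0) :=
    (hintg β₂ hβ2).const_mul C₂
  have I3 : IntegrableOn (fun x : ℝ => C₃ * Real.exp ((β₃ - β) * x)) (Set.Ioi 0) :=
    (hintg β₃ hβ3).const_mul C₃
  have I12 : IntegrableOn (fun x : ℝ => C₁ * Real.exp ((β₁ - β) * x)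
      + C₂ * Real.exp ((β₂ - β) * x)) (Set.Ioi 0) := I1.add I2
  rw [MeasureTheory.integral_add I12 I3, MeasureTheory.integral_add I1 I2,
    hint β₁ C₁ hβ1, hint β₂ C₂ hβ2, hint β₃ C₃ hβ3]
  rw [hDval, hC₁, hC₂, hC₃]
  have h1 : β - β₁ ≠ 0 := by linarith
  have h2 : β - β₂ ≠ 0 := by linarith
  have h3 : β - β₃ ≠ 0 := by linarith
  have h4 : β₂ - β₁ ≠ 0 := by linarith
  have h5 : β₃ - β₁ ≠ 0 := by linarith
  have h6 : β₃ - β₂ ≠ 0 := by linarith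
  have h7 : σ^2 ≠ 0 := by positivity
  have h8 : θ + c + β ≠ 0 := ne_of_gt hβt
  exact stmt5_alg σ (θ+c) β β₁ β₂ β₃ h7 h1 h2 h3 h4 h5 h6 h8
end

section
/- Let K > 0, let k* be the real number with e^{k*} = Kq/(σ²/2 + q + λ/(θ+1)²), and set c₁ = (β₂K + (1−β₂)e^{k*})/(β₂−β₁) and c₂ = (β₁K + (1−β₁)e^{k*})/(β₁−β₂). Then for all real x: Kq·Σ_{i=1}^3 (C_i/β_i)e^{β_i(x−k*)} − e^x = c₁e^{β₁(x−k*)} + c₂e^{β₂(x−k*)}. (This shows the two expressions for the value function U of the McKean optimal stopping problem on (k*,∞) agree.) -/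
set_option maxHeartbeats 1600000 in
/-- The two expressions for the value function `U` of the McKean optimal
stopping problem agree on `(k*,∞)`:
`Kq·Σ (C_i/β_i)e^{β_i(x−k*)} − e^x = c₁e^{β₁(x−k*)} + c₂e^{β₂(x−k*)}`. -/
theorem stmt_11
    (σ lam θ μ q : ℝ) (hσ : 0 < σ) (hlam : 0 < lam) (hθ : 0 < θ) (hq : 0 < q)
    (hμ : μ = q - σ^2/2 + lam/(θ+1))
    (ψ : ℝ → ℝ)
    (hψ : ∀ z : ℝ, z ≠ -θ → ψ z = σ^2/2 * z^2 + μ * z + lam * (θ/(θ+z) - 1))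
    (β₁ β₂ β₃ : ℝ) (h12 : β₁ < β₂) (h23 : β₂ < β₃) (h3 : β₃ = 1)
    (hcubic : ∀ z : ℝ, z ≠ -θ →
      σ^2/2 * (z - β₁) * (z - β₂) * (z - 1) = (θ + z) * (ψ z - q))
    (C₁ C₂ C₃ : ℝ)
    (hC₁ : C₁ = 2 * (θ + β₁) / (σ^2 * ((β₂ - β₁) * (β₃ - β₁))))
    (hC₂ : C₂ = 2 * (θ + β₂) / (σ^2 * ((β₁ - β₂) * (β₃ - β₂))))
    (hC₃ : C₃ = 2 * (θ + β₃) / (σ^2 * ((β₁ - β₃) * (β₂ - β₃))))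
    (K : ℝ) (hK : 0 < K)
    (kstar : ℝ) (hkstar : Real.exp kstar = K * q / (σ^2/2 + q + lam/(θ+1)^2))
    (c₁ c₂ : ℝ)
    (hc₁ : c₁ = (β₂ * K + (1 - β₂) * Real.exp kstar) / (β₂ - β₁))
    (hc₂ : c₂ = (β₁ * K + (1 - β₁) * Real.exp kstar) / (β₁ - β₂)) :
    ∀ x : ℝ,
      K * q * (C₁ / β₁ * Real.exp (β₁ * (x - kstar))
          + C₂ / β₂ * Real.exp (β₂ * (x - kstar))
          + C₃ / β₃ * Real.exp (β₃ * (x - kstar))) - Real.exp x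
        = c₁ * Real.exp (β₁ * (x - kstar)) + c₂ * Real.exp (β₂ * (x - kstar)) := by
  subst h3
  have hθ1 : θ + 1 ≠ 0 := by positivity
  have hσ2 : (σ:ℝ)^2 ≠ 0 := by positivity
  -- polynomial form of the cubic identity
  have hpoly : ∀ z : ℝ, z ≠ -θ →
      σ^2/2 * (z - β₁) * (z - β₂) * (z - 1)
        = (θ + z) * (σ^2/2 * z^2 + μ * z - q) - lam * z := by
    intro z hz
    have hzθ : θ + z ≠ 0 := by
      intro h; apply hz; linarith
    have hdiv : (θ + z) * (θ / (θ + z)) = θ := by field_simp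
    have h := hcubic z hz
    rw [hψ z hz] at h
    linear_combination h + lam * hdiv
  have h0 := hpoly 0 (by intro h; linarith)
  have hC : σ^2/2 * (β₁*β₂) = θ*q := by linear_combination -h0
  have h2 := hpoly 2 (by intro h; linarith)
  have hμ' : μ*(θ+1) = (q - σ^2/2)*(θ+1) + lam := by
    rw [hμ]; field_simp
  have hA : σ^2/2*(β₁+β₂) = -(μ + θ*(σ^2/2) + σ^2/2) := by
    linear_combination (-(1:ℝ)/2)*h2 + (1/2)*hC - hμ'
  have h1b : σ^2/2*(1-β₁)*(1-β₂)*(θ+1) = (θ+1)^2*(σ^2/2+q) + lam := by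
    linear_combination (θ+1)*hC - (θ+1)*hA + hμ'
  have hD : (0:ℝ) < σ^2/2 + q + lam/(θ+1)^2 := by positivity
  have hDval : (σ^2/2+q+lam/(θ+1)^2) * (θ+1) = σ^2/2*(1-β₁)*(1-β₂) := by
    field_simp
    linear_combination (-(2:ℝ))*h1b
  have hE' : Real.exp kstar * (σ^2/2*(1-β₁)*(1-β₂)) = K*q*(θ+1) := by
    rw [hkstar]
    rw [div_mul_eq_mul_div, div_eq_iff hD.ne']
    linear_combination (-(K*q))*hDval
  have hb1 : β₁ ≠ 0 := by
    intro h
    rw [h] at hC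
    nlinarith [hC]
  have hb2 : β₂ ≠ 0 := by
    intro h
    rw [h] at hC
    nlinarith [hC]
  have hb11 : (1:ℝ) - β₁ ≠ 0 := by intro h; linarith
  have hb21 : (1:ℝ) - β₂ ≠ 0 := by intro h; linarith
  have hb12 : β₂ - β₁ ≠ 0 := by intro h; linarith
  have hb12' : β₁ - β₂ ≠ 0 := by intro h; linarith
  have e3 : K * q * C₃ = Real.exp kstar := by
    rw [hC₃]
    have hne : σ^2 * ((β₁-1)*(β₂-1)) ≠ 0 := by
      apply mul_ne_zero hσ2
      apply mul_ne_zero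
      · intro h; apply hb11; linarith
      · intro h; apply hb21; linarith
    field_simp
    rw [div_eq_iff (mul_ne_zero (sub_ne_zero.mpr (ne_of_lt (by linarith))) (sub_ne_zero.mpr (ne_of_lt (by linarith))))]
    linear_combination (-2:ℝ)*hE'
  have e1 : K * q * (C₁ / β₁) = c₁ := by
    rw [hC₁, hc₁]
    field_simp
    linear_combination (-2*β₁)*hE' + (-2*K*(1-β₁))*hC
  have e2 : K * q * (C₂ / β₂) = c₂ := by
    rw [hC₂, hc₂]
    field_simp
    linear_combination (-2*β₂)*hE' + (-2*K*(1-β₂))*hC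
  intro x
  have hx : Real.exp x = Real.exp kstar * Real.exp (1*(x - kstar)) := by
    rw [← Real.exp_add]; ring_nf
  rw [hx]
  linear_combination (Real.exp (β₁*(x-kstar)))*e1 + (Real.exp (β₂*(x-kstar)))*e2
    + (Real.exp (1*(x-kstar)))*e3
end

section
/- Assume moreover δ/K = q·Σ_{i=1}^3 (C_i/β_i)K^{β_i}e^{−β_i x*} − 1. Then a real y > log K satisfies the equation ∫_{−∞}^0 ∫_{−∞}^{t} (w_δ(t+y) − δ)·e^{−(t−u)}·λθe^{θu} du dt = δq if and only if e^{θy} = (λθK^{θ+1}/((θ+1)qδ))·( q·Σ_{i=1}^3 (C_i K^{β_i}/(β_i(θ+β_i)))·e^{−β_i x*} − 1/(θ+1) − δ/(θK) ). (This is the explicit formula for the optimal level y* of the minimiser in the McKean stochastic game for the jump-diffusion.) -/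
open MeasureTheory Set Filter Topology

section Aux

lemma hasDerivAt_exp_mul_div (c x : ℝ) (hc : c ≠ 0) :
    HasDerivAt (fun y : ℝ => Real.exp (c * y) / c) (Real.exp (c * x)) x := by
  have h1 : HasDerivAt (fun y : ℝ => c * y) c x := by
    simpa using (hasDerivAt_id x).const_mul c
  have h2 := (Real.hasDerivAt_exp (c * x)).comp x h1
  have h3 := h2.div_const c
  rw [mul_div_cancel_right₀ _ hc] at h3
  exact h3

lemma intervalIntegral_exp_mul (c a b : ℝ) (hc : c ≠ 0) :
    ∫ x in a..b, Real.exp (c * x) = (Real.exp (c * b) - Real.exp (c * a)) / c := by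
  rw [intervalIntegral.integral_eq_sub_of_hasDerivAt
      (fun x _ => hasDerivAt_exp_mul_div c x hc)
      ((Real.continuous_exp.comp (continuous_const.mul continuous_id)).intervalIntegrable a b)]
  ring

lemma expMulIntegrableOn_Iic {c : ℝ} (hc : 0 < c) (t : ℝ) :
    MeasureTheory.IntegrableOn (fun u : ℝ => Real.exp (c * u)) (Set.Iic t) := by
  refine MeasureTheory.integrableOn_Iic_of_intervalIntegral_norm_bounded
      (Real.exp (c * t) / c) t
      (fun y : ℝ => ((Real.continuous_exp.comp
        (continuous_const.mul continuous_id)).integrableOn_Icc).mono_set Set.Ioc_subset_Icc_self)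
      tendsto_id ?_
  filter_upwards [Filter.eventually_le_atBot t] with y hy
  have hnorm : ∀ x : ℝ, ‖Real.exp (c * x)‖ = Real.exp (c * x) := fun x =>
    Real.norm_of_nonneg (Real.exp_pos _).le
  simp_rw [hnorm]
  rw [id_eq, intervalIntegral_exp_mul c y t hc.ne']
  rw [div_le_div_iff_of_pos_right hc]
  linarith [Real.exp_pos (c * y)]

lemma expMulIntegrableOn_Iio {c : ℝ} (hc : 0 < c) (t : ℝ) :
    MeasureTheory.IntegrableOn (fun u : ℝ => Real.exp (c * u)) (Set.Iio t) :=
  (expMulIntegrableOn_Iic hc t).mono_set Set.Iio_subset_Iic_self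

lemma integral_exp_mul_Iic' {c : ℝ} (hc : 0 < c) (t : ℝ) :
    ∫ u in Set.Iic t, Real.exp (c * u) = Real.exp (c * t) / c := by
  have htend : Filter.Tendsto (fun x : ℝ => Real.exp (c * x) / c) atBot (nhds 0) := by
    have h1 : Filter.Tendsto (fun x : ℝ => c * x) atBot atBot :=
      (Filter.tendsto_const_mul_atBot_of_pos hc).mpr tendsto_id
    simpa using (Real.tendsto_exp_atBot.comp h1).div_const c
  rw [MeasureTheory.integral_Iic_of_hasDerivAt_of_tendsto'
      (fun x _ => hasDerivAt_exp_mul_div c x hc.ne') (expMulIntegrableOn_Iic hc t) htend]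
  simp

lemma integral_exp_mul_Iio {c : ℝ} (hc : 0 < c) (t : ℝ) :
    ∫ u in Set.Iio t, Real.exp (c * u) = Real.exp (c * t) / c := by
  rw [MeasureTheory.setIntegral_congr_set MeasureTheory.Iio_ae_eq_Iic]
  exact integral_exp_mul_Iic' hc t

end Aux

open MeasureTheory

set_option maxHeartbeats 2000000 in
/-- Assuming the continuous-fit equation for `x*`, a real `y > log K` solves
the integral equation for the minimiser's optimal level iff `e^{θy}` equals the
stated explicit expression. -/
theorem stmt_15
    (σ lam θ μ q : ℝ) (hσ : 0 < σ) (hlam : 0 < lam) (hθ : 0 < θ) (hq : 0 < q)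
    (hμ : μ = q - σ^2/2 + lam/(θ+1))
    (ψ : ℝ → ℝ)
    (hψ : ∀ z : ℝ, z ≠ -θ → ψ z = σ^2/2 * z^2 + μ * z + lam * (θ/(θ+z) - 1))
    (β₁ β₂ β₃ : ℝ) (h12 : β₁ < β₂) (h23 : β₂ < β₃) (h3 : β₃ = 1)
    (hcubic : ∀ z : ℝ, z ≠ -θ →
      σ^2/2 * (z - β₁) * (z - β₂) * (z - 1) = (θ + z) * (ψ z - q))
    (C₁ C₂ C₃ : ℝ)
    (hC₁ : C₁ = 2 * (θ + β₁) / (σ^2 * ((β₂ - β₁) * (β₃ - β₁))))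
    (hC₂ : C₂ = 2 * (θ + β₂) / (σ^2 * ((β₁ - β₂) * (β₃ - β₂))))
    (hC₃ : C₃ = 2 * (θ + β₃) / (σ^2 * ((β₁ - β₃) * (β₂ - β₃))))
    (K : ℝ) (hK : 0 < K) (xstar : ℝ) (hxstar : xstar < Real.log K)
    (δ : ℝ) (hδ : 0 < δ)
    (w : ℝ → ℝ)
    (hw1 : ∀ x : ℝ, x ≤ xstar → w x = K - Real.exp x)
    (hw2 : ∀ x : ℝ, xstar < x → x < Real.log K →
      w x = K * q * (C₁ / β₁ * Real.exp (β₁ * (x - xstar))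
          + C₂ / β₂ * Real.exp (β₂ * (x - xstar))
          + C₃ / β₃ * Real.exp (β₃ * (x - xstar))) - Real.exp x)
    (hw3 : ∀ x : ℝ, Real.log K ≤ x → w x = δ)
    (hxeq : δ / K = q * (C₁ / β₁ * K ^ β₁ * Real.exp (-β₁ * xstar)
        + C₂ / β₂ * K ^ β₂ * Real.exp (-β₂ * xstar)
        + C₃ / β₃ * K ^ β₃ * Real.exp (-β₃ * xstar)) - 1) :
    ∀ y : ℝ, Real.log K < y →
      ((∫ t in Set.Iio (0:ℝ), ∫ u in Set.Iio t,
          (w (t + y) - δ) * Real.exp (-(t - u)) * (lam * θ * Real.exp (θ * u)))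
        = δ * q
      ↔ Real.exp (θ * y)
          = (lam * θ * K ^ (θ + 1) / ((θ + 1) * q * δ)) *
              (q * (C₁ * K ^ β₁ / (β₁ * (θ + β₁)) * Real.exp (-β₁ * xstar)
                  + C₂ * K ^ β₂ / (β₂ * (θ + β₂)) * Real.exp (-β₂ * xstar)
                  + C₃ * K ^ β₃ / (β₃ * (θ + β₃)) * Real.exp (-β₃ * xstar))
                - 1 / (θ + 1) - δ / (θ * K))) := by
  subst h3
  intro y hy
  set L := Real.log K with hLdef
  have hLK : Real.exp L = K := Real.exp_log hK
  have hθ1 : (0:ℝ) < θ + 1 := by linarith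
  have hσ2 : (0:ℝ) < σ^2 := by positivity
  -- polynomial identity extended over z = -θ by continuity
  have hpoly : ∀ z : ℝ, σ^2/2 * (z - β₁) * (z - β₂) * (z - 1)
      = (θ + z) * (σ^2/2 * z^2 + μ * z - (lam + q)) + lam * θ := by
    have hfg : (fun z : ℝ => σ^2/2 * (z - β₁) * (z - β₂) * (z - 1))
        = fun z : ℝ => (θ + z) * (σ^2/2 * z^2 + μ * z - (lam + q)) + lam * θ := by
      apply Continuous.ext_on (dense_compl_singleton (-θ)) (by fun_prop) (by fun_prop)
      intro z hz
      have hz' : z ≠ -θ := hz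
      have hθz : θ + z ≠ 0 := by
        intro h; exact hz' (by linarith)
      have h1 := hcubic z hz'
      rw [hψ z hz'] at h1
      show σ^2/2 * (z - β₁) * (z - β₂) * (z - 1)
          = (θ + z) * (σ^2/2 * z^2 + μ * z - (lam + q)) + lam * θ
      rw [h1]
      field_simp
      ring
    intro z; exact congrFun hfg z
  have key1 : σ^2/2 * (β₁*β₂) = θ*q := by linear_combination -(hpoly 0)
  have key2 : σ^2/2 * ((θ+β₁)*(θ+β₂)*(θ+1)) = -(lam*θ) := by linear_combination -(hpoly (-θ))
  have hprod : (θ+β₁)*(θ+β₂) < 0 := by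
    by_contra hcon
    push_neg at hcon
    have h6 : 0 ≤ σ^2/2 * ((θ+β₁)*(θ+β₂)*(θ+1)) :=
      mul_nonneg (by positivity) (mul_nonneg hcon hθ1.le)
    linarith [mul_pos hlam hθ, key2, h6]
  have hb1θ : θ + β₁ < 0 := by
    by_contra hcon
    push_neg at hcon
    have h6 : 0 ≤ (θ+β₁)*(θ+β₂) := mul_nonneg hcon (by linarith)
    linarith
  have hb2θ : 0 < θ + β₂ := by
    by_contra hcon
    push_neg at hcon
    have h6 := mul_nonneg (neg_nonneg.2 hb1θ.le) (neg_nonneg.2 hcon)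
    rw [neg_mul_neg] at h6
    linarith
  have hb1 : β₁ < 0 := by linarith
  have hb2 : β₂ < 0 := by
    by_contra hcon
    push_neg at hcon
    have h5 : 0 ≤ (-β₁) * β₂ := mul_nonneg (by linarith) hcon
    have h6 : 0 ≤ σ^2/2 * ((-β₁)*β₂) := mul_nonneg (by positivity) h5
    nlinarith [key1, mul_pos hθ hq, h6]
  have hb1ne : β₁ ≠ 0 := ne_of_lt hb1
  have hb2ne : β₂ ≠ 0 := ne_of_lt hb2
  have hθne : θ ≠ 0 := ne_of_gt hθ
  have hθ1ne : θ + 1 ≠ 0 := ne_of_gt hθ1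
  have hθb1ne : θ + β₁ ≠ 0 := ne_of_lt hb1θ
  have hθb2ne : θ + β₂ ≠ 0 := ne_of_gt hb2θ
  have hσne : σ ≠ 0 := ne_of_gt hσ
  have h21ne : β₂ - β₁ ≠ 0 := by intro h; linarith [h12]
  have h31ne : (1:ℝ) - β₁ ≠ 0 := by intro h; linarith
  have h32ne : (1:ℝ) - β₂ ≠ 0 := by intro h; linarith [h23]
  -- key partial fraction identity
  have keyC : q * (C₁/β₁/(θ+β₁) + C₂/β₂/(θ+β₂) + C₃/(θ+1)) = 1/θ := by
    have h2 : C₁/β₁/(θ+β₁) + C₂/β₂/(θ+β₂) + C₃/(θ+1) = 2/(σ^2*(β₁*β₂)) := by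
      rw [hC₁, hC₂, hC₃]
      have h12ne : β₁ - β₂ ≠ 0 := by intro h; apply h21ne; linarith
      have h13ne : β₁ - 1 ≠ 0 := by intro h; apply h31ne; linarith
      have h23ne : β₂ - 1 ≠ 0 := by intro h; apply h32ne; linarith
      field_simp
      ring
    rw [h2]
    have hne : σ^2*(β₁*β₂) = 2*(θ*q) := by linear_combination 2 * key1
    rw [hne]
    field_simp
  have hqne : q ≠ 0 := ne_of_gt hq
  have hδne : δ ≠ 0 := ne_of_gt hδ
  have hKne : K ≠ 0 := ne_of_gt hK
  have hab : xstar - y < L - y := by linarith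
  have hb0 : L - y < 0 := by linarith
  -- inner integral
  have hinner : ∀ t : ℝ,
      (∫ u in Set.Iio t, (w (t + y) - δ) * Real.exp (-(t - u)) * (lam * θ * Real.exp (θ * u)))
      = lam * θ / (θ + 1) * ((w (t + y) - δ) * Real.exp (θ * t)) := by
    intro t
    have h1 : ∀ u : ℝ, (w (t + y) - δ) * Real.exp (-(t - u)) * (lam * θ * Real.exp (θ * u))
        = ((w (t + y) - δ) * lam * θ * Real.exp (-t)) * Real.exp ((θ + 1) * u) := by
      intro u
      rw [show (θ + 1) * u = θ * u + u by ring, Real.exp_add (θ * u) u,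
          show -(t - u) = -t + u by ring, Real.exp_add (-t) u]
      ring
    simp only [h1]
    rw [MeasureTheory.integral_const_mul, integral_exp_mul_Iio hθ1 t,
        show (θ + 1) * t = θ * t + t by ring, Real.exp_add (θ * t) t, Real.exp_neg]
    field_simp
  have houter : (∫ t in Set.Iio (0:ℝ), ∫ u in Set.Iio t,
      (w (t + y) - δ) * Real.exp (-(t - u)) * (lam * θ * Real.exp (θ * u)))
      = lam * θ / (θ + 1) * ∫ t in Set.Iio (0:ℝ), (w (t + y) - δ) * Real.exp (θ * t) := by
    rw [← MeasureTheory.integral_const_mul]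
    exact MeasureTheory.setIntegral_congr_fun measurableSet_Iio (fun t _ => hinner t)
  -- piece 1 : (-∞, xstar - y)
  have hEq1 : Set.EqOn (fun t => (w (t + y) - δ) * Real.exp (θ * t))
      (fun t => (K - δ) * Real.exp (θ * t) - Real.exp y * Real.exp ((θ + 1) * t))
      (Set.Iio (xstar - y)) := by
    intro t ht
    have ht' : t < xstar - y := ht
    simp only
    rw [hw1 (t + y) (by linarith),
        show (θ + 1) * t = θ * t + t by ring, Real.exp_add (θ * t) t, Real.exp_add t y]
    ring
  have hint1 : MeasureTheory.IntegrableOn (fun t => (w (t + y) - δ) * Real.exp (θ * t))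
      (Set.Iio (xstar - y)) := by
    have hg : MeasureTheory.IntegrableOn
        (fun t => (K - δ) * Real.exp (θ * t) - Real.exp y * Real.exp ((θ + 1) * t))
        (Set.Iio (xstar - y)) :=
      ((expMulIntegrableOn_Iio hθ _).const_mul (K - δ)).sub
        ((expMulIntegrableOn_Iio hθ1 _).const_mul (Real.exp y))
    exact hg.congr_fun hEq1.symm measurableSet_Iio
  have hval1 : (∫ t in Set.Iio (xstar - y), (w (t + y) - δ) * Real.exp (θ * t))
      = (K - δ) * (Real.exp (θ * (xstar - y)) / θ)
        - Real.exp y * (Real.exp ((θ + 1) * (xstar - y)) / (θ + 1)) := by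
    rw [MeasureTheory.setIntegral_congr_fun measurableSet_Iio hEq1,
        MeasureTheory.integral_sub
          ((expMulIntegrableOn_Iio hθ _).const_mul (K - δ))
          ((expMulIntegrableOn_Iio hθ1 _).const_mul (Real.exp y)),
        MeasureTheory.integral_const_mul, MeasureTheory.integral_const_mul,
        integral_exp_mul_Iio hθ, integral_exp_mul_Iio hθ1]
  -- piece 2 : (xstar - y, L - y)
  have hEq2 : Set.EqOn (fun t => (w (t + y) - δ) * Real.exp (θ * t))
      (fun t => K * q * (C₁ / β₁) * Real.exp (β₁ * (y - xstar)) * Real.exp ((θ + β₁) * t)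
        + K * q * (C₂ / β₂) * Real.exp (β₂ * (y - xstar)) * Real.exp ((θ + β₂) * t)
        + K * q * C₃ * Real.exp (y - xstar) * Real.exp ((θ + 1) * t)
        - Real.exp y * Real.exp ((θ + 1) * t) - δ * Real.exp (θ * t))
      (Set.Ioo (xstar - y) (L - y)) := by
    intro t ht
    obtain ⟨ht1, ht2⟩ := ht
    simp only
    rw [hw2 (t + y) (by linarith) (by linarith)]
    simp only [mul_add, mul_sub, add_mul, sub_mul, one_mul, Real.exp_add, Real.exp_sub]
    field_simp
  have hFcont : Continuous (fun t => K * q * (C₁ / β₁) * Real.exp (β₁ * (y - xstar)) * Real.exp ((θ + β₁) * t)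
        + K * q * (C₂ / β₂) * Real.exp (β₂ * (y - xstar)) * Real.exp ((θ + β₂) * t)
        + K * q * C₃ * Real.exp (y - xstar) * Real.exp ((θ + 1) * t)
        - Real.exp y * Real.exp ((θ + 1) * t) - δ * Real.exp (θ * t)) := by
    fun_prop
  have hFIoo : MeasureTheory.IntegrableOn (fun t => K * q * (C₁ / β₁) * Real.exp (β₁ * (y - xstar)) * Real.exp ((θ + β₁) * t)
        + K * q * (C₂ / β₂) * Real.exp (β₂ * (y - xstar)) * Real.exp ((θ + β₂) * t)
        + K * q * C₃ * Real.exp (y - xstar) * Real.exp ((θ + 1) * t)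
        - Real.exp y * Real.exp ((θ + 1) * t) - δ * Real.exp (θ * t))
      (Set.Ioo (xstar - y) (L - y)) :=
    (hFcont.integrableOn_Icc).mono_set Set.Ioo_subset_Icc_self
  have hint2 : MeasureTheory.IntegrableOn (fun t => (w (t + y) - δ) * Real.exp (θ * t))
      (Set.Ico (xstar - y) (L - y)) :=
    (hFIoo.congr_fun hEq2.symm measurableSet_Ioo).congr_set_ae
      (MeasureTheory.Ico_ae_eq_Ioc.trans MeasureTheory.Ioo_ae_eq_Ioc.symm)
  have hDeriv : ∀ t ∈ Set.uIcc (xstar - y) (L - y),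
      HasDerivAt (fun t => K * q * (C₁ / β₁) * Real.exp (β₁ * (y - xstar)) * (Real.exp ((θ + β₁) * t) / (θ + β₁))
        + K * q * (C₂ / β₂) * Real.exp (β₂ * (y - xstar)) * (Real.exp ((θ + β₂) * t) / (θ + β₂))
        + K * q * C₃ * Real.exp (y - xstar) * (Real.exp ((θ + 1) * t) / (θ + 1))
        - Real.exp y * (Real.exp ((θ + 1) * t) / (θ + 1)) - δ * (Real.exp (θ * t) / θ))
      (K * q * (C₁ / β₁) * Real.exp (β₁ * (y - xstar)) * Real.exp ((θ + β₁) * t)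
        + K * q * (C₂ / β₂) * Real.exp (β₂ * (y - xstar)) * Real.exp ((θ + β₂) * t)
        + K * q * C₃ * Real.exp (y - xstar) * Real.exp ((θ + 1) * t)
        - Real.exp y * Real.exp ((θ + 1) * t) - δ * Real.exp (θ * t)) t := by
    intro t _
    exact (((((hasDerivAt_exp_mul_div (θ + β₁) t hθb1ne).const_mul
        (K * q * (C₁ / β₁) * Real.exp (β₁ * (y - xstar)))).add
      ((hasDerivAt_exp_mul_div (θ + β₂) t hθb2ne).const_mul
        (K * q * (C₂ / β₂) * Real.exp (β₂ * (y - xstar))))).add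
      ((hasDerivAt_exp_mul_div (θ + 1) t hθ1ne).const_mul
        (K * q * C₃ * Real.exp (y - xstar)))).sub
      ((hasDerivAt_exp_mul_div (θ + 1) t hθ1ne).const_mul (Real.exp y))).sub
      ((hasDerivAt_exp_mul_div θ t hθne).const_mul δ)
  have hval2 : (∫ t in Set.Ico (xstar - y) (L - y), (w (t + y) - δ) * Real.exp (θ * t))
      = (K * q * (C₁ / β₁) * Real.exp (β₁ * (y - xstar)) * (Real.exp ((θ + β₁) * (L - y)) / (θ + β₁))
        + K * q * (C₂ / β₂) * Real.exp (β₂ * (y - xstar)) * (Real.exp ((θ + β₂) * (L - y)) / (θ + β₂))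
        + K * q * C₃ * Real.exp (y - xstar) * (Real.exp ((θ + 1) * (L - y)) / (θ + 1))
        - Real.exp y * (Real.exp ((θ + 1) * (L - y)) / (θ + 1)) - δ * (Real.exp (θ * (L - y)) / θ))
      - (K * q * (C₁ / β₁) * Real.exp (β₁ * (y - xstar)) * (Real.exp ((θ + β₁) * (xstar - y)) / (θ + β₁))
        + K * q * (C₂ / β₂) * Real.exp (β₂ * (y - xstar)) * (Real.exp ((θ + β₂) * (xstar - y)) / (θ + β₂))
        + K * q * C₃ * Real.exp (y - xstar) * (Real.exp ((θ + 1) * (xstar - y)) / (θ + 1))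
        - Real.exp y * (Real.exp ((θ + 1) * (xstar - y)) / (θ + 1)) - δ * (Real.exp (θ * (xstar - y)) / θ)) := by
    rw [MeasureTheory.setIntegral_congr_set MeasureTheory.Ico_ae_eq_Ioc,
        ← MeasureTheory.setIntegral_congr_set MeasureTheory.Ioo_ae_eq_Ioc,
        MeasureTheory.setIntegral_congr_fun measurableSet_Ioo hEq2,
        MeasureTheory.setIntegral_congr_set MeasureTheory.Ioo_ae_eq_Ioc,
        ← intervalIntegral.integral_of_le hab.le,
        intervalIntegral.integral_eq_sub_of_hasDerivAt hDeriv
          (hFcont.intervalIntegrable _ _)]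
  -- piece 3 : (L - y, 0)
  have hEq3 : Set.EqOn (fun t => (w (t + y) - δ) * Real.exp (θ * t))
      (fun _ => (0:ℝ)) (Set.Ico (L - y) 0) := by
    intro t ht
    obtain ⟨ht1, _⟩ := ht
    simp only
    rw [hw3 (t + y) (by linarith)]
    ring
  have hint3 : MeasureTheory.IntegrableOn (fun t => (w (t + y) - δ) * Real.exp (θ * t))
      (Set.Ico (L - y) 0) :=
    (MeasureTheory.integrableOn_zero).congr_fun hEq3.symm measurableSet_Ico
  have hval3 : (∫ t in Set.Ico (L - y) 0, (w (t + y) - δ) * Real.exp (θ * t)) = 0 := by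
    rw [MeasureTheory.setIntegral_congr_fun measurableSet_Ico hEq3]
    simp
  -- splitting
  have disj1 : Disjoint (Set.Iio (xstar - y)) (Set.Ico (xstar - y) (L - y)) := by
    rw [Set.disjoint_left]
    intro x hx hx2
    exact absurd hx2.1 (not_le.mpr hx)
  have disj2 : Disjoint (Set.Iio (L - y)) (Set.Ico (L - y) 0) := by
    rw [Set.disjoint_left]
    intro x hx hx2
    exact absurd hx2.1 (not_le.mpr hx)
  have hintb : MeasureTheory.IntegrableOn (fun t => (w (t + y) - δ) * Real.exp (θ * t))
      (Set.Iio (L - y)) := by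
    rw [← Set.Iio_union_Ico_eq_Iio hab.le]
    exact hint1.union hint2
  have hsplit2 : (∫ t in Set.Iio (L - y), (w (t + y) - δ) * Real.exp (θ * t))
      = (∫ t in Set.Iio (xstar - y), (w (t + y) - δ) * Real.exp (θ * t))
        + ∫ t in Set.Ico (xstar - y) (L - y), (w (t + y) - δ) * Real.exp (θ * t) := by
    rw [← Set.Iio_union_Ico_eq_Iio hab.le]
    exact MeasureTheory.setIntegral_union disj1 measurableSet_Ico hint1 hint2
  have hsplit1 : (∫ t in Set.Iio (0:ℝ), (w (t + y) - δ) * Real.exp (θ * t))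
      = (∫ t in Set.Iio (L - y), (w (t + y) - δ) * Real.exp (θ * t))
        + ∫ t in Set.Ico (L - y) 0, (w (t + y) - δ) * Real.exp (θ * t) := by
    rw [← Set.Iio_union_Ico_eq_Iio hb0.le]
    exact MeasureTheory.setIntegral_union disj2 measurableSet_Ico hintb hint3
  -- value of J * exp(θ y)
  have hJY : (∫ t in Set.Iio (0:ℝ), (w (t + y) - δ) * Real.exp (θ * t)) * Real.exp (θ * y)
      = (Real.exp L - δ) * (Real.exp (θ * xstar) / θ)
        - Real.exp (θ * xstar) * Real.exp xstar / (θ + 1)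
        + Real.exp L * q * (C₁ / β₁) * ((Real.exp (θ * L) * Real.exp (β₁ * L) / Real.exp (β₁ * xstar)
            - Real.exp (θ * xstar)) / (θ + β₁))
        + Real.exp L * q * (C₂ / β₂) * ((Real.exp (θ * L) * Real.exp (β₂ * L) / Real.exp (β₂ * xstar)
            - Real.exp (θ * xstar)) / (θ + β₂))
        + Real.exp L * q * C₃ * ((Real.exp (θ * L) * Real.exp L / Real.exp xstar
            - Real.exp (θ * xstar)) / (θ + 1))
        - (Real.exp (θ * L) * Real.exp L - Real.exp (θ * xstar) * Real.exp xstar) / (θ + 1)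
        - δ * (Real.exp (θ * L) - Real.exp (θ * xstar)) / θ := by
    rw [hsplit1, hsplit2, hval1, hval2, hval3,
        show K = Real.exp L from hLK.symm]
    simp only [mul_add, mul_sub, add_mul, sub_mul, one_mul, Real.exp_add, Real.exp_sub]
    field_simp
    ring
  have hcancelX : Real.exp L / θ
      - Real.exp L * q * (C₁/β₁/(θ+β₁) + C₂/β₂/(θ+β₂) + C₃/(θ+1)) = 0 := by
    linear_combination (-(Real.exp L)) * keyC
  have hNM : (Real.exp L - δ) * (Real.exp (θ * xstar) / θ)
        - Real.exp (θ * xstar) * Real.exp xstar / (θ + 1)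
        + Real.exp L * q * (C₁ / β₁) * ((Real.exp (θ * L) * Real.exp (β₁ * L) / Real.exp (β₁ * xstar)
            - Real.exp (θ * xstar)) / (θ + β₁))
        + Real.exp L * q * (C₂ / β₂) * ((Real.exp (θ * L) * Real.exp (β₂ * L) / Real.exp (β₂ * xstar)
            - Real.exp (θ * xstar)) / (θ + β₂))
        + Real.exp L * q * C₃ * ((Real.exp (θ * L) * Real.exp L / Real.exp xstar
            - Real.exp (θ * xstar)) / (θ + 1))
        - (Real.exp (θ * L) * Real.exp L - Real.exp (θ * xstar) * Real.exp xstar) / (θ + 1)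
        - δ * (Real.exp (θ * L) - Real.exp (θ * xstar)) / θ
      = Real.exp (θ * L) * Real.exp L * q *
          ((C₁ / β₁) * (Real.exp (β₁ * L) / Real.exp (β₁ * xstar)) / (θ + β₁)
            + (C₂ / β₂) * (Real.exp (β₂ * L) / Real.exp (β₂ * xstar)) / (θ + β₂)
            + C₃ * (Real.exp L / Real.exp xstar) / (θ + 1))
        - Real.exp (θ * L) * Real.exp L / (θ + 1) - δ * Real.exp (θ * L) / θ := by
    linear_combination Real.exp (θ * xstar) * hcancelX
  have hRHS : δ * q * ((lam * θ * K ^ (θ + 1) / ((θ + 1) * q * δ)) *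
          (q * (C₁ * K ^ β₁ / (β₁ * (θ + β₁)) * Real.exp (-β₁ * xstar)
              + C₂ * K ^ β₂ / (β₂ * (θ + β₂)) * Real.exp (-β₂ * xstar)
              + C₃ * K ^ (1:ℝ) / (1 * (θ + 1)) * Real.exp (-1 * xstar))
            - 1 / (θ + 1) - δ / (θ * K)))
      = lam * θ / (θ + 1) *
        (Real.exp (θ * L) * Real.exp L * q *
          ((C₁ / β₁) * (Real.exp (β₁ * L) / Real.exp (β₁ * xstar)) / (θ + β₁)
            + (C₂ / β₂) * (Real.exp (β₂ * L) / Real.exp (β₂ * xstar)) / (θ + β₂)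
            + C₃ * (Real.exp L / Real.exp xstar) / (θ + 1))
        - Real.exp (θ * L) * Real.exp L / (θ + 1) - δ * Real.exp (θ * L) / θ) := by
    rw [show K ^ (θ+1) = Real.exp (θ * L) * Real.exp L by
          rw [Real.rpow_def_of_pos hK, ← hLdef, ← Real.exp_add]
          exact congrArg Real.exp (by ring),
        show K ^ β₁ = Real.exp (β₁ * L) by
          rw [Real.rpow_def_of_pos hK, ← hLdef]
          exact congrArg Real.exp (by ring),
        show K ^ β₂ = Real.exp (β₂ * L) by
          rw [Real.rpow_def_of_pos hK, ← hLdef]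
          exact congrArg Real.exp (by ring),
        Real.rpow_one,
        show K = Real.exp L from hLK.symm]
    simp only [neg_mul, one_mul, Real.exp_neg]
    field_simp
  -- final assembly
  rw [houter]
  have hkey : lam * θ / (θ + 1) * (∫ t in Set.Iio (0:ℝ), (w (t + y) - δ) * Real.exp (θ * t))
        * Real.exp (θ * y)
      = δ * q * ((lam * θ * K ^ (θ + 1) / ((θ + 1) * q * δ)) *
          (q * (C₁ * K ^ β₁ / (β₁ * (θ + β₁)) * Real.exp (-β₁ * xstar)
              + C₂ * K ^ β₂ / (β₂ * (θ + β₂)) * Real.exp (-β₂ * xstar)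
              + C₃ * K ^ (1:ℝ) / (1 * (θ + 1)) * Real.exp (-1 * xstar))
            - 1 / (θ + 1) - δ / (θ * K))) := by
    rw [mul_assoc, hJY, hNM, ← hRHS]
  constructor
  · intro h
    rw [h] at hkey
    exact mul_left_cancel₀ (mul_pos hδ hq).ne' hkey
  · intro h
    rw [← h] at hkey
    exact mul_right_cancel₀ (Real.exp_ne_zero _) hkey
end

section
/- Assume moreover δ/K = q·Σ_{i=1}^3 (C_i/β_i)K^{β_i}e^{−β_i x*} − 1. Then the equation ∫_{−∞}^0 ∫_{−∞}^{t} (w_δ(t + log K) − δ)·e^{−(t−u)}·λθe^{θu} du dt = δq holds if and only if q·Σ_{i=1}^3 (C_i K^{β_i}/(β_i(θ+β_i)))·e^{−β_i x*} − ((λ + (θ+1)q)/(λθK))·δ = 1/(θ+1). (This is the equation characterising the threshold penalty δ₀ in the jump-diffusion case.) -/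
open MeasureTheory

lemma my_intervalIntegrable_exp_mul (A r s t : ℝ) :
    IntervalIntegrable (fun x => A * Real.exp (r*x)) volume s t :=
  (Continuous.intervalIntegrable (by continuity) s t)

lemma my_integral_exp_mul (A r s t : ℝ) (hr : r ≠ 0) :
    ∫ x in s..t, A * Real.exp (r*x) = A * (Real.exp (r*t) - Real.exp (r*s)) / r := by
  have h : ∀ x : ℝ, HasDerivAt (fun y => A * Real.exp (r*y) / r) (A * Real.exp (r*x)) x := by
    intro x
    have h1 : HasDerivAt (fun y => Real.exp (r*y)) (r * Real.exp (r*x)) x := by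
      simpa [mul_comm, Function.comp_def] using (Real.hasDerivAt_exp (r*x)).comp x ((hasDerivAt_id x).const_mul r)
    have := (h1.const_mul A).div_const r
    refine this.congr_deriv ?_
    rw [div_eq_iff hr]; ring
  rw [intervalIntegral.integral_eq_sub_of_hasDerivAt (fun x _ => h x)
    (my_intervalIntegrable_exp_mul A r s t)]
  field_simp

lemma my_integrableOn_exp_mul_Iic (A : ℝ) {b : ℝ} (hb : 0 < b) (c : ℝ) :
    IntegrableOn (fun x => A * Real.exp (b*x)) (Set.Iic c) := by
  refine integrableOn_Iic_of_intervalIntegral_norm_bounded (|A| * Real.exp (b*c) / b) c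
    (fun y => ((my_intervalIntegrable_exp_mul A b y c).1)) Filter.tendsto_id
    (Filter.eventually_of_mem (Filter.Iic_mem_atBot c) fun y hy => ?_)
  have hy' : y ≤ c := hy
  have : ∀ x : ℝ, ‖A * Real.exp (b*x)‖ = |A| * Real.exp (b*x) := by
    intro x; rw [norm_mul, Real.norm_eq_abs, Real.norm_eq_abs, abs_of_pos (Real.exp_pos _)]
  simp_rw [this]
  rw [my_integral_exp_mul |A| b y c (ne_of_gt hb)]
  have h1 : Real.exp (b*y) ≤ Real.exp (b*c) := Real.exp_le_exp.mpr (by nlinarith)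
  have h2 : (0:ℝ) ≤ |A| := abs_nonneg A
  rw [div_le_div_iff₀ hb hb]
  nlinarith [mul_nonneg (mul_nonneg h2 (Real.exp_pos (b*y)).le) hb.le]

lemma my_integral_exp_mul_Iic (A : ℝ) {b : ℝ} (hb : 0 < b) (c : ℝ) :
    ∫ x in Set.Iic c, A * Real.exp (b*x) = A * Real.exp (b*c) / b := by
  have h : ∀ x ∈ Set.Iic c, HasDerivAt (fun y => A * Real.exp (b*y) / b) (A * Real.exp (b*x)) x := by
    intro x _
    have h1 : HasDerivAt (fun y => Real.exp (b*y)) (b * Real.exp (b*x)) x := by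
      simpa [mul_comm, Function.comp_def] using (Real.hasDerivAt_exp (b*x)).comp x ((hasDerivAt_id x).const_mul b)
    have := (h1.const_mul A).div_const b
    refine this.congr_deriv ?_
    rw [div_eq_iff (ne_of_gt hb)]; ring
  have htend : Filter.Tendsto (fun y => A * Real.exp (b*y) / b) Filter.atBot (nhds 0) := by
    have : Filter.Tendsto (fun y : ℝ => b*y) Filter.atBot Filter.atBot :=
      Filter.tendsto_atBot_atBot.mpr (fun x => ⟨x/b, fun y hy => by
        rw [le_div_iff₀ hb] at hy; nlinarith⟩)
    have := (Real.tendsto_exp_atBot.comp this).const_mul A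
    simpa using this.div_const b
  rw [MeasureTheory.integral_Iic_of_hasDerivAt_of_tendsto' h
    (my_integrableOn_exp_mul_Iic A hb c) htend]
  simp

set_option maxHeartbeats 1000000 in
lemma key_lemma (σ θ lam q K δ β₁ β₂ C₁ C₂ C₃ P Q E1 E2 X : ℝ)
    (hσne : σ ≠ 0) (hKne : K ≠ 0) (hθne : θ ≠ 0) (hθ1ne : θ + 1 ≠ 0) (hlamne : lam ≠ 0)
    (hb1 : β₁ ≠ 0) (hb2 : β₂ ≠ 0) (htb1 : θ + β₁ ≠ 0) (htb2 : θ + β₂ ≠ 0)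
    (hd1 : β₂ - β₁ ≠ 0) (hd2 : (1:ℝ) - β₁ ≠ 0) (hd3 : β₁ - β₂ ≠ 0) (hd4 : (1:ℝ) - β₂ ≠ 0)
    (hd5 : β₁ - 1 ≠ 0) (hd6 : β₂ - 1 ≠ 0)
    (hC₁ : C₁ = 2 * (θ + β₁) / (σ^2 * ((β₂ - β₁) * (1 - β₁))))
    (hC₂ : C₂ = 2 * (θ + β₂) / (σ^2 * ((β₁ - β₂) * (1 - β₂))))
    (hC₃ : C₃ = 2 * (θ + 1) / (σ^2 * ((β₁ - 1) * (β₂ - 1))))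
    (hq' : q = σ^2*(β₁*β₂)/(2*θ)) :
    (K - δ)*(lam*θ/(θ+1))*P/θ - K*(lam*θ/(θ+1))*Q/(θ+1)
      + ((lam*θ/(θ+1))*(K*q*(C₁/β₁))*(E1 - P)/(θ+β₁)
        + (lam*θ/(θ+1))*(K*q*(C₂/β₂))*(E2 - P)/(θ+β₂)
        + (lam*θ/(θ+1))*(K*q*C₃)*(K*X - P)/(θ+1)
        - (lam*θ/(θ+1))*K*(1 - Q)/(θ+1)
        - (lam*θ/(θ+1))*δ*(1 - P)/θ)
      - δ*q
    = (lam*θ*K/(θ+1)) * (q*(C₁*E1/(β₁*(θ+β₁)) + C₂*E2/(β₂*(θ+β₂)) + C₃*(K*X)/(1*(θ+1)))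
        - ((lam+(θ+1)*q)/(lam*θ*K))*δ - 1/(θ+1)) := by
  have SP : q*(C₁/β₁/(θ+β₁) + C₂/β₂/(θ+β₂) + C₃/(θ+1)) = 1/θ := by
    rw [hC₁, hC₂, hC₃, hq']; field_simp; ring
  have LD : lam*θ*K/(θ+1) * ((lam+(θ+1)*q)/(lam*θ*K)) = lam/(θ+1) + q := by
    field_simp
  have LD2 : lam*θ/(θ+1)/θ = lam/(θ+1) := by field_simp
  have LB1 : C₁*E1/(β₁*(θ+β₁)) = C₁*E1/β₁/(θ+β₁) := (div_div _ _ _).symm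
  have LB2 : C₂*E2/(β₂*(θ+β₂)) = C₂*E2/β₂/(θ+β₂) := (div_div _ _ _).symm
  linear_combination (-((lam*θ/(θ+1))*K*P)) * SP + δ * LD + (-δ) * LD2
    + (-(lam*θ*K/(θ+1)*q)) * LB1 + (-(lam*θ*K/(θ+1)*q)) * LB2

set_option maxHeartbeats 1000000 in
/-- Assuming the continuous-fit equation for `x*`, the integral equation at
`y = log K` holds iff the equation characterising the threshold penalty `δ₀`
in the jump-diffusion case holds. -/
theorem stmt_16
    (σ lam θ μ q : ℝ) (hσ : 0 < σ) (hlam : 0 < lam) (hθ : 0 < θ) (hq : 0 < q)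
    (hμ : μ = q - σ^2/2 + lam/(θ+1))
    (ψ : ℝ → ℝ)
    (hψ : ∀ z : ℝ, z ≠ -θ → ψ z = σ^2/2 * z^2 + μ * z + lam * (θ/(θ+z) - 1))
    (β₁ β₂ β₃ : ℝ) (h12 : β₁ < β₂) (h23 : β₂ < β₃) (h3 : β₃ = 1)
    (hcubic : ∀ z : ℝ, z ≠ -θ →
      σ^2/2 * (z - β₁) * (z - β₂) * (z - 1) = (θ + z) * (ψ z - q))
    (C₁ C₂ C₃ : ℝ)
    (hC₁ : C₁ = 2 * (θ + β₁) / (σ^2 * ((β₂ - β₁) * (β₃ - β₁))))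
    (hC₂ : C₂ = 2 * (θ + β₂) / (σ^2 * ((β₁ - β₂) * (β₃ - β₂))))
    (hC₃ : C₃ = 2 * (θ + β₃) / (σ^2 * ((β₁ - β₃) * (β₂ - β₃))))
    (K : ℝ) (hK : 0 < K) (xstar : ℝ) (hxstar : xstar < Real.log K)
    (δ : ℝ) (hδ : 0 < δ)
    (w : ℝ → ℝ)
    (hw1 : ∀ x : ℝ, x ≤ xstar → w x = K - Real.exp x)
    (hw2 : ∀ x : ℝ, xstar < x → x < Real.log K →
      w x = K * q * (C₁ / β₁ * Real.exp (β₁ * (x - xstar))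
          + C₂ / β₂ * Real.exp (β₂ * (x - xstar))
          + C₃ / β₃ * Real.exp (β₃ * (x - xstar))) - Real.exp x)
    (hw3 : ∀ x : ℝ, Real.log K ≤ x → w x = δ)
    (hxeq : δ / K = q * (C₁ / β₁ * K ^ β₁ * Real.exp (-β₁ * xstar)
        + C₂ / β₂ * K ^ β₂ * Real.exp (-β₂ * xstar)
        + C₃ / β₃ * K ^ β₃ * Real.exp (-β₃ * xstar)) - 1) :
    (∫ t in Set.Iio (0:ℝ), ∫ u in Set.Iio t,
        (w (t + Real.log K) - δ) * Real.exp (-(t - u)) * (lam * θ * Real.exp (θ * u)))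
      = δ * q
    ↔ q * (C₁ * K ^ β₁ / (β₁ * (θ + β₁)) * Real.exp (-β₁ * xstar)
          + C₂ * K ^ β₂ / (β₂ * (θ + β₂)) * Real.exp (-β₂ * xstar)
          + C₃ * K ^ β₃ / (β₃ * (θ + β₃)) * Real.exp (-β₃ * xstar))
        - ((lam + (θ + 1) * q) / (lam * θ * K)) * δ = 1 / (θ + 1) := by
  subst h3
  have hθ1 : (0:ℝ) < θ + 1 := by linarith
  -- polynomial identities
  have hP : ∀ z : ℝ, z ≠ -θ →
      σ^2/2*(z-β₁)*(z-β₂)*(z-1) = (θ+z)*(σ^2/2*z^2+μ*z-lam-q) + lam*θ := by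
    intro z hz
    have hne : θ + z ≠ 0 := fun h0 => hz (by linarith)
    have h := hcubic z hz
    rw [hψ z hz] at h
    rw [h]; field_simp; ring
  have h0 := hP 0 (by intro h; linarith)
  have hF1 : σ^2/2*(β₁*β₂) = θ*q := by linear_combination -h0
  have h1 := hP 1 (by intro h; linarith)
  have h2 := hP 2 (by intro h; linarith)
  have h3 := hP 3 (by intro h; linarith)
  have hF2 : σ^2/2*((θ+β₁)*(θ+β₂))*(θ+1) = -(lam*θ) := by
    linear_combination (-(θ+2)*(θ+3)/2)*h1 + ((θ+1)*(θ+3))*h2 + (-(θ+1)*(θ+2)/2)*h3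
  have hb1 : β₁ ≠ 0 := by intro h; rw [h] at hF1; nlinarith [mul_pos hθ hq]
  have hb2 : β₂ ≠ 0 := by intro h; rw [h] at hF1; nlinarith [mul_pos hθ hq]
  have htb1 : θ + β₁ ≠ 0 := by intro h; rw [h] at hF2; nlinarith [mul_pos hlam hθ]
  have htb2 : θ + β₂ ≠ 0 := by intro h; rw [h] at hF2; nlinarith [mul_pos hlam hθ]
  have hq' : q = σ^2*(β₁*β₂)/(2*θ) := by field_simp; linarith [hF1]
  -- inner integral
  have hinner : ∀ t : ℝ, (∫ u in Set.Iio t,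
      (w (t + Real.log K) - δ) * Real.exp (-(t - u)) * (lam * θ * Real.exp (θ * u)))
      = (w (t + Real.log K) - δ) * (lam * θ / (θ + 1)) * Real.exp (θ * t) := by
    intro t
    have hfe : (fun u => (w (t + Real.log K) - δ) * Real.exp (-(t - u)) * (lam * θ * Real.exp (θ * u)))
        = fun u => ((w (t + Real.log K) - δ) * (lam * θ) * Real.exp (-t)) * Real.exp ((θ+1)*u) := by
      funext u
      have he : Real.exp (-(t-u)) * Real.exp (θ*u) = Real.exp (-t) * Real.exp ((θ+1)*u) := by
        rw [← Real.exp_add, ← Real.exp_add]; congr 1; ring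
      linear_combination ((w (t + Real.log K) - δ) * (lam*θ)) * he
    rw [hfe, ← MeasureTheory.integral_Iic_eq_integral_Iio,
        my_integral_exp_mul_Iic _ hθ1 t]
    have he2 : Real.exp (-t) * Real.exp ((θ+1)*t) = Real.exp (θ*t) := by
      rw [← Real.exp_add]; congr 1; ring
    linear_combination ((w (t + Real.log K) - δ) * (lam*θ) / (θ+1)) * he2
  simp only [hinner]
  obtain ⟨a, ha_def⟩ : ∃ a : ℝ, a = xstar - Real.log K := ⟨_, rfl⟩
  have haneg : a < 0 := by rw [ha_def]; linarith
  have hunion : Set.Iic a ∪ Set.Ioo a 0 = Set.Iio (0:ℝ) := Set.Iic_union_Ioo_eq_Iio haneg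
  have hdisj : Disjoint (Set.Iic a) (Set.Ioo a (0:ℝ)) := by
    apply Set.disjoint_left.mpr
    rintro x hx ⟨h1', _⟩
    exact absurd (Set.mem_Iic.mp hx) (not_le.mpr h1')
  have heq1 : Set.EqOn
      (fun t => ((K - δ)*(lam*θ/(θ+1))) * Real.exp (θ*t) - (K*(lam*θ/(θ+1))) * Real.exp ((θ+1)*t))
      (fun t => (w (t + Real.log K) - δ) * (lam * θ / (θ + 1)) * Real.exp (θ * t)) (Set.Iic a) := by
    intro t ht
    simp only [Set.mem_Iic] at ht
    have hxle : t + Real.log K ≤ xstar := by rw [ha_def] at ht; linarith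
    simp only
    rw [hw1 _ hxle]
    have hel : Real.exp (t + Real.log K) = Real.exp t * K := by rw [Real.exp_add, Real.exp_log hK]
    have he2 : Real.exp ((θ+1)*t) = Real.exp (θ*t) * Real.exp t := by
      rw [← Real.exp_add]; congr 1; ring
    rw [hel, he2]; ring
  have heq2 : Set.EqOn
      (fun t => (w (t + Real.log K) - δ) * (lam * θ / (θ + 1)) * Real.exp (θ * t))
      (fun t => (K * q * (C₁ / β₁ * Real.exp (β₁ * (t + Real.log K - xstar))
          + C₂ / β₂ * Real.exp (β₂ * (t + Real.log K - xstar))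
          + C₃ / 1 * Real.exp (1 * (t + Real.log K - xstar))) - Real.exp (t + Real.log K) - δ)
          * (lam * θ / (θ + 1)) * Real.exp (θ * t)) (Set.Ioo a 0) := by
    intro t ht
    obtain ⟨ht1, ht2⟩ := ht
    rw [ha_def] at ht1
    simp only
    rw [hw2 (t + Real.log K) (by linarith) (by linarith)]
  have hgfun : (fun t => (K * q * (C₁ / β₁ * Real.exp (β₁ * (t + Real.log K - xstar))
          + C₂ / β₂ * Real.exp (β₂ * (t + Real.log K - xstar))
          + C₃ / 1 * Real.exp (1 * (t + Real.log K - xstar))) - Real.exp (t + Real.log K) - δ)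
          * (lam * θ / (θ + 1)) * Real.exp (θ * t))
      = fun t => ((lam*θ/(θ+1)) * (K*q*(C₁/β₁)) * Real.exp (-(β₁*a))) * Real.exp ((θ+β₁)*t)
        + ((lam*θ/(θ+1)) * (K*q*(C₂/β₂)) * Real.exp (-(β₂*a))) * Real.exp ((θ+β₂)*t)
        + ((lam*θ/(θ+1)) * (K*q*C₃) * Real.exp (-a)) * Real.exp ((θ+1)*t)
        - ((lam*θ/(θ+1)) * K) * Real.exp ((θ+1)*t)
        - ((lam*θ/(θ+1)) * δ) * Real.exp (θ*t) := by
    funext t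
    have e1 : Real.exp (β₁ * (t + Real.log K - xstar)) * Real.exp (θ*t)
        = Real.exp (-(β₁*a)) * Real.exp ((θ+β₁)*t) := by
      rw [← Real.exp_add, ← Real.exp_add]; congr 1; rw [ha_def]; ring
    have e2 : Real.exp (β₂ * (t + Real.log K - xstar)) * Real.exp (θ*t)
        = Real.exp (-(β₂*a)) * Real.exp ((θ+β₂)*t) := by
      rw [← Real.exp_add, ← Real.exp_add]; congr 1; rw [ha_def]; ring
    have e3 : Real.exp (1 * (t + Real.log K - xstar)) * Real.exp (θ*t)
        = Real.exp (-a) * Real.exp ((θ+1)*t) := by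
      rw [← Real.exp_add, ← Real.exp_add]; congr 1; rw [ha_def]; ring
    have e4 : Real.exp (t + Real.log K) * Real.exp (θ*t) = K * Real.exp ((θ+1)*t) := by
      conv_rhs => rw [show K = Real.exp (Real.log K) from (Real.exp_log hK).symm]
      rw [← Real.exp_add, ← Real.exp_add]; congr 1; ring
    linear_combination ((lam*θ/(θ+1)) * (K*q*(C₁/β₁))) * e1
      + ((lam*θ/(θ+1)) * (K*q*(C₂/β₂))) * e2
      + ((lam*θ/(θ+1)) * (K*q*C₃)) * e3 - (lam*θ/(θ+1)) * e4
  have hi1 : IntegrableOn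
      (fun t => (w (t + Real.log K) - δ) * (lam * θ / (θ + 1)) * Real.exp (θ * t)) (Set.Iic a) := by
    refine IntegrableOn.congr_fun ?_ heq1 measurableSet_Iic
    exact (my_integrableOn_exp_mul_Iic ((K - δ)*(lam*θ/(θ+1))) hθ a).sub
      (my_integrableOn_exp_mul_Iic (K*(lam*θ/(θ+1))) hθ1 a)
  have hi2 : IntegrableOn
      (fun t => (w (t + Real.log K) - δ) * (lam * θ / (θ + 1)) * Real.exp (θ * t)) (Set.Ioo a 0) := by
    refine IntegrableOn.congr_fun ?_ (fun t ht => (heq2 ht).symm) measurableSet_Ioo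
    have hcont : Continuous (fun t => (K * q * (C₁ / β₁ * Real.exp (β₁ * (t + Real.log K - xstar))
          + C₂ / β₂ * Real.exp (β₂ * (t + Real.log K - xstar))
          + C₃ / 1 * Real.exp (1 * (t + Real.log K - xstar))) - Real.exp (t + Real.log K) - δ)
          * (lam * θ / (θ + 1)) * Real.exp (θ * t)) := by fun_prop
    exact (hcont.integrableOn_Icc (a := a) (b := 0)).mono_set Set.Ioo_subset_Icc_self
  have i1 : IntervalIntegrable
      (fun t => ((lam*θ/(θ+1)) * (K*q*(C₁/β₁)) * Real.exp (-(β₁*a))) * Real.exp ((θ+β₁)*t))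
      volume a 0 := my_intervalIntegrable_exp_mul _ _ a 0
  have i2 : IntervalIntegrable
      (fun t => ((lam*θ/(θ+1)) * (K*q*(C₂/β₂)) * Real.exp (-(β₂*a))) * Real.exp ((θ+β₂)*t))
      volume a 0 := my_intervalIntegrable_exp_mul _ _ a 0
  have i3 : IntervalIntegrable
      (fun t => ((lam*θ/(θ+1)) * (K*q*C₃) * Real.exp (-a)) * Real.exp ((θ+1)*t))
      volume a 0 := my_intervalIntegrable_exp_mul _ _ a 0
  have i4 : IntervalIntegrable
      (fun t => ((lam*θ/(θ+1)) * K) * Real.exp ((θ+1)*t)) volume a 0 :=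
    my_intervalIntegrable_exp_mul _ _ a 0
  have i5 : IntervalIntegrable
      (fun t => ((lam*θ/(θ+1)) * δ) * Real.exp (θ*t)) volume a 0 :=
    my_intervalIntegrable_exp_mul _ _ a 0
  have hJ : (∫ t in Set.Iio (0:ℝ),
        (w (t + Real.log K) - δ) * (lam * θ / (θ + 1)) * Real.exp (θ * t))
      = ((K - δ)*(lam*θ/(θ+1))) * Real.exp (θ*a) / θ
        - (K*(lam*θ/(θ+1))) * Real.exp ((θ+1)*a) / (θ+1)
        + (((lam*θ/(θ+1)) * (K*q*(C₁/β₁)) * Real.exp (-(β₁*a)))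
            * (Real.exp ((θ+β₁)*0) - Real.exp ((θ+β₁)*a)) / (θ+β₁)
          + ((lam*θ/(θ+1)) * (K*q*(C₂/β₂)) * Real.exp (-(β₂*a)))
            * (Real.exp ((θ+β₂)*0) - Real.exp ((θ+β₂)*a)) / (θ+β₂)
          + ((lam*θ/(θ+1)) * (K*q*C₃) * Real.exp (-a))
            * (Real.exp ((θ+1)*0) - Real.exp ((θ+1)*a)) / (θ+1)
          - ((lam*θ/(θ+1)) * K) * (Real.exp ((θ+1)*0) - Real.exp ((θ+1)*a)) / (θ+1)
          - ((lam*θ/(θ+1)) * δ) * (Real.exp (θ*0) - Real.exp (θ*a)) / θ) := by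
    rw [← hunion, MeasureTheory.setIntegral_union hdisj measurableSet_Ioo hi1 hi2]
    rw [← MeasureTheory.setIntegral_congr_fun measurableSet_Iic heq1]
    rw [MeasureTheory.integral_sub (my_integrableOn_exp_mul_Iic _ hθ a)
      (my_integrableOn_exp_mul_Iic _ hθ1 a)]
    rw [my_integral_exp_mul_Iic _ hθ a, my_integral_exp_mul_Iic _ hθ1 a]
    rw [MeasureTheory.setIntegral_congr_fun measurableSet_Ioo heq2]
    rw [← MeasureTheory.integral_Ioc_eq_integral_Ioo, ← intervalIntegral.integral_of_le haneg.le]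
    rw [hgfun]
    rw [intervalIntegral.integral_sub (((i1.add i2).add i3).sub i4) i5]
    rw [intervalIntegral.integral_sub ((i1.add i2).add i3) i4]
    rw [intervalIntegral.integral_add (i1.add i2) i3, intervalIntegral.integral_add i1 i2]
    rw [my_integral_exp_mul _ _ _ _ htb1, my_integral_exp_mul _ _ _ _ htb2,
      my_integral_exp_mul _ _ _ _ (ne_of_gt hθ1), my_integral_exp_mul _ _ _ _ (ne_of_gt hθ1),
      my_integral_exp_mul _ _ _ _ (ne_of_gt hθ)]
  rw [hJ]
  simp only [mul_zero, Real.exp_zero]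
  have hσne : σ ≠ 0 := ne_of_gt hσ
  have hKne : K ≠ 0 := ne_of_gt hK
  have hθne : θ ≠ 0 := ne_of_gt hθ
  have hθ1ne : θ + 1 ≠ 0 := ne_of_gt hθ1
  have hlamne : lam ≠ 0 := ne_of_gt hlam
  have hd1 : β₂ - β₁ ≠ 0 := sub_ne_zero.mpr (ne_of_gt h12)
  have hd2 : (1:ℝ) - β₁ ≠ 0 := sub_ne_zero.mpr (by intro h; rw [← h] at h12; linarith)
  have hd3 : β₁ - β₂ ≠ 0 := sub_ne_zero.mpr (ne_of_lt h12)
  have hd4 : (1:ℝ) - β₂ ≠ 0 := sub_ne_zero.mpr (ne_of_gt h23)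
  have hd5 : β₁ - 1 ≠ 0 := sub_ne_zero.mpr (by intro h; rw [h] at h12; linarith)
  have hd6 : β₂ - 1 ≠ 0 := sub_ne_zero.mpr (ne_of_lt h23)
  have hA : (K - δ) * (lam * θ / (θ + 1)) * Real.exp (θ * a) / θ
        - K * (lam * θ / (θ + 1)) * Real.exp ((θ + 1) * a) / (θ + 1)
        + (lam * θ / (θ + 1) * (K * q * (C₁ / β₁)) * Real.exp (-(β₁ * a))
            * (1 - Real.exp ((θ + β₁) * a)) / (θ + β₁)
          + lam * θ / (θ + 1) * (K * q * (C₂ / β₂)) * Real.exp (-(β₂ * a))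
            * (1 - Real.exp ((θ + β₂) * a)) / (θ + β₂)
          + lam * θ / (θ + 1) * (K * q * C₃) * Real.exp (-a)
            * (1 - Real.exp ((θ + 1) * a)) / (θ + 1)
          - lam * θ / (θ + 1) * K * (1 - Real.exp ((θ + 1) * a)) / (θ + 1)
          - lam * θ / (θ + 1) * δ * (1 - Real.exp (θ * a)) / θ)
      = (K - δ)*(lam*θ/(θ+1))*Real.exp (θ*a)/θ
        - K*(lam*θ/(θ+1))*Real.exp ((θ+1)*a)/(θ+1)
        + ((lam*θ/(θ+1))*(K*q*(C₁/β₁))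
            * (Real.exp (β₁*(Real.log K - xstar)) - Real.exp (θ*a))/(θ+β₁)
          + (lam*θ/(θ+1))*(K*q*(C₂/β₂))
            * (Real.exp (β₂*(Real.log K - xstar)) - Real.exp (θ*a))/(θ+β₂)
          + (lam*θ/(θ+1))*(K*q*C₃)
            * (K*Real.exp (-xstar) - Real.exp (θ*a))/(θ+1)
          - (lam*θ/(θ+1))*K*(1 - Real.exp ((θ+1)*a))/(θ+1)
          - (lam*θ/(θ+1))*δ*(1 - Real.exp (θ*a))/θ) := by
    have g1 : Real.exp (-(β₁*a)) * Real.exp ((θ+β₁)*a) = Real.exp (θ*a) := by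
      rw [← Real.exp_add]; congr 1; ring
    have g2 : Real.exp (-(β₂*a)) * Real.exp ((θ+β₂)*a) = Real.exp (θ*a) := by
      rw [← Real.exp_add]; congr 1; ring
    have g3 : Real.exp (-a) * Real.exp ((θ+1)*a) = Real.exp (θ*a) := by
      rw [← Real.exp_add]; congr 1; ring
    have g1' : Real.exp (-(β₁*a)) = Real.exp (β₁*(Real.log K - xstar)) := by
      congr 1; rw [ha_def]; ring
    have g2' : Real.exp (-(β₂*a)) = Real.exp (β₂*(Real.log K - xstar)) := by
      congr 1; rw [ha_def]; ring
    have g3' : Real.exp (-a) = K * Real.exp (-xstar) := by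
      rw [show K = Real.exp (Real.log K) from (Real.exp_log hK).symm, ← Real.exp_add]
      congr 1; rw [ha_def]; ring
    linear_combination ((lam*θ/(θ+1))*(K*q*(C₁/β₁))/(θ+β₁)) * g1'
      - ((lam*θ/(θ+1))*(K*q*(C₁/β₁))/(θ+β₁)) * g1
      + ((lam*θ/(θ+1))*(K*q*(C₂/β₂))/(θ+β₂)) * g2'
      - ((lam*θ/(θ+1))*(K*q*(C₂/β₂))/(θ+β₂)) * g2
      + ((lam*θ/(θ+1))*(K*q*C₃)/(θ+1)) * g3'
      - ((lam*θ/(θ+1))*(K*q*C₃)/(θ+1)) * g3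
  have hB : q * (C₁ * K ^ β₁ / (β₁ * (θ + β₁)) * Real.exp (-β₁ * xstar)
        + C₂ * K ^ β₂ / (β₂ * (θ + β₂)) * Real.exp (-β₂ * xstar)
        + C₃ * K ^ (1:ℝ) / (1 * (θ + 1)) * Real.exp (-1 * xstar))
        - (lam + (θ + 1) * q) / (lam * θ * K) * δ
      = q*(C₁*Real.exp (β₁*(Real.log K - xstar))/(β₁*(θ+β₁))
          + C₂*Real.exp (β₂*(Real.log K - xstar))/(β₂*(θ+β₂))
          + C₃*(K*Real.exp (-xstar))/(1*(θ+1)))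
        - ((lam+(θ+1)*q)/(lam*θ*K))*δ := by
    have b1 : (K:ℝ) ^ β₁ * Real.exp (-β₁ * xstar) = Real.exp (β₁*(Real.log K - xstar)) := by
      rw [Real.rpow_def_of_pos hK, ← Real.exp_add]; congr 1; ring
    have b2 : (K:ℝ) ^ β₂ * Real.exp (-β₂ * xstar) = Real.exp (β₂*(Real.log K - xstar)) := by
      rw [Real.rpow_def_of_pos hK, ← Real.exp_add]; congr 1; ring
    have b3 : (K:ℝ) ^ (1:ℝ) * Real.exp (-1 * xstar) = K * Real.exp (-xstar) := by
      rw [Real.rpow_one, show (-1:ℝ)*xstar = -xstar from by ring]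
    linear_combination (q*C₁/(β₁*(θ+β₁))) * b1 + (q*C₂/(β₂*(θ+β₂))) * b2
      + (q*C₃/(1*(θ+1))) * b3
  rw [hA, hB]
  conv_lhs => rw [← sub_eq_zero]
  conv_rhs => rw [← sub_eq_zero]
  rw [key_lemma σ θ lam q K δ β₁ β₂ C₁ C₂ C₃ (Real.exp (θ*a)) (Real.exp ((θ+1)*a))
      (Real.exp (β₁*(Real.log K - xstar))) (Real.exp (β₂*(Real.log K - xstar)))
      (Real.exp (-xstar)) hσne hKne hθne hθ1ne hlamne hb1 hb2 htb1 htb2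
      hd1 hd2 hd3 hd4 hd5 hd6 hC₁ hC₂ hC₃ hq', mul_eq_zero]
  have hMne : ¬(lam * θ * K / (θ + 1) = 0) := by positivity
  exact or_iff_right hMne
end

section
/- Define W^{(q)} : ℝ → ℝ by W^{(q)}(s) = Σ_{i=1}^3 C_i e^{β_i s} for s ≥ 0 and W^{(q)}(s) = 0 for s < 0, and Z^{(q)} : ℝ → ℝ by Z^{(q)}(s) = q·Σ_{i=1}^3 (C_i/β_i)e^{β_i s} for s ≥ 0 and Z^{(q)}(s) = 1 for s < 0. Suppose y* > log K satisfies ∫_{−∞}^0 ∫_{−∞}^{t} (w_δ(t+y*) − δ)·e^{−(t−u)}·λθe^{θu} du dt = δq. Then for every x > y*: δ·Z^{(q)}(x−y*) − ∫_{−∞}^0 ∫_{−∞}^{t} (w_δ(t+y*) − δ)·W^{(q)}(x−y*−t+u)·λθe^{θu} du dt = (δ/(β₂−β₁))·( β₂e^{β₁(x−y*)} − β₁e^{β₂(x−y*)} ). (This is the explicit formula for the value function V of the McKean stochastic game on (y*, ∞) in the jump-diffusion case.) -/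
open MeasureTheory
set_option maxHeartbeats 2000000

lemma exp_integral_Iio' (b : ℝ) {c : ℝ} (hc : 0 < c) :
    ∫ u in Set.Iio b, Real.exp (c * u) = Real.exp (c * b) / c := by
  rw [← integral_Iic_eq_integral_Iio]
  have h1 := integral_comp_neg_Iic b (fun y => Real.exp (-(c * y)))
  simp only [mul_neg, neg_neg] at h1
  rw [h1]
  have h2 := integral_comp_mul_left_Ioi (fun y => Real.exp (-y)) (-b) hc
  simp only [smul_eq_mul] at h2
  rw [h2, integral_exp_neg_Ioi]
  rw [mul_neg, neg_neg]
  rw [eq_div_iff hc.ne']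
  field_simp

lemma exp_integral_interval' (a b : ℝ) {c : ℝ} (hc : c ≠ 0) :
    ∫ u in a..b, Real.exp (c * u) = (Real.exp (c * b) - Real.exp (c * a)) / c := by
  have h := intervalIntegral.mul_integral_comp_mul_left (f := Real.exp) (a := a) (b := b) (c := c)
  rw [integral_exp] at h
  rw [eq_div_iff hc, mul_comm]
  exact h

/-- The explicit formula for the value function `V` of the McKean stochastic
game on `(y*, ∞)` in the jump-diffusion case: if `y* > log K` satisfies the
integral equation, then for `x > y*`,
`δZ^{(q)}(x−y*) − ∫∫ (w_δ(t+y*) − δ)W^{(q)}(x−y*−t+u)λθe^{θu} du dt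
  = (δ/(β₂−β₁))(β₂e^{β₁(x−y*)} − β₁e^{β₂(x−y*)})`. -/
theorem stmt_17
    (σ lam θ μ q : ℝ) (hσ : 0 < σ) (hlam : 0 < lam) (hθ : 0 < θ) (hq : 0 < q)
    (hμ : μ = q - σ^2/2 + lam/(θ+1))
    (ψ : ℝ → ℝ)
    (hψ : ∀ z : ℝ, z ≠ -θ → ψ z = σ^2/2 * z^2 + μ * z + lam * (θ/(θ+z) - 1))
    (β₁ β₂ β₃ : ℝ) (h12 : β₁ < β₂) (h23 : β₂ < β₃) (h3 : β₃ = 1)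
    (hcubic : ∀ z : ℝ, z ≠ -θ →
      σ^2/2 * (z - β₁) * (z - β₂) * (z - 1) = (θ + z) * (ψ z - q))
    (C₁ C₂ C₃ : ℝ)
    (hC₁ : C₁ = 2 * (θ + β₁) / (σ^2 * ((β₂ - β₁) * (β₃ - β₁))))
    (hC₂ : C₂ = 2 * (θ + β₂) / (σ^2 * ((β₁ - β₂) * (β₃ - β₂))))
    (hC₃ : C₃ = 2 * (θ + β₃) / (σ^2 * ((β₁ - β₃) * (β₂ - β₃))))
    (K : ℝ) (hK : 0 < K) (xstar : ℝ) (hxstar : xstar < Real.log K)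
    (δ : ℝ) (hδ : 0 < δ)
    (w : ℝ → ℝ)
    (hw1 : ∀ x : ℝ, x ≤ xstar → w x = K - Real.exp x)
    (hw2 : ∀ x : ℝ, xstar < x → x < Real.log K →
      w x = K * q * (C₁ / β₁ * Real.exp (β₁ * (x - xstar))
          + C₂ / β₂ * Real.exp (β₂ * (x - xstar))
          + C₃ / β₃ * Real.exp (β₃ * (x - xstar))) - Real.exp x)
    (hw3 : ∀ x : ℝ, Real.log K ≤ x → w x = δ)
    (W : ℝ → ℝ)
    (hW : ∀ s : ℝ, W s = if 0 ≤ s then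
        C₁ * Real.exp (β₁ * s) + C₂ * Real.exp (β₂ * s) + C₃ * Real.exp (β₃ * s)
      else 0)
    (Z : ℝ → ℝ)
    (hZ : ∀ s : ℝ, Z s = if 0 ≤ s then
        q * (C₁ / β₁ * Real.exp (β₁ * s) + C₂ / β₂ * Real.exp (β₂ * s)
          + C₃ / β₃ * Real.exp (β₃ * s))
      else 1)
    (ystar : ℝ) (hystar : Real.log K < ystar)
    (hyeq : (∫ t in Set.Iio (0:ℝ), ∫ u in Set.Iio t,
        (w (t + ystar) - δ) * Real.exp (-(t - u)) * (lam * θ * Real.exp (θ * u)))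
      = δ * q) :
    ∀ x : ℝ, ystar < x →
      δ * Z (x - ystar)
        - (∫ t in Set.Iio (0:ℝ), ∫ u in Set.Iio t,
            (w (t + ystar) - δ) * W (x - ystar - t + u) * (lam * θ * Real.exp (θ * u)))
      = (δ / (β₂ - β₁)) *
          (β₂ * Real.exp (β₁ * (x - ystar)) - β₁ * Real.exp (β₂ * (x - ystar))) := by

  -- eliminate β₃
  subst h3
  -- the polynomial identity
  have hpoly : ∀ z : ℝ, σ^2/2 * (z - β₁) * (z - β₂) * (z - 1)
      = (θ + z) * (σ^2/2 * z^2 + μ * z - lam - q) + lam * θ := by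
    have hcont1 : Continuous fun z : ℝ => σ^2/2 * (z - β₁) * (z - β₂) * (z - 1) := by fun_prop
    have hcont2 : Continuous fun z : ℝ =>
        (θ + z) * (σ^2/2 * z^2 + μ * z - lam - q) + lam * θ := by fun_prop
    have heq : Set.EqOn (fun z : ℝ => σ^2/2 * (z - β₁) * (z - β₂) * (z - 1))
        (fun z : ℝ => (θ + z) * (σ^2/2 * z^2 + μ * z - lam - q) + lam * θ) {(-θ)}ᶜ := by
      intro z hz
      have hz' : z ≠ -θ := hz
      have hz0 : θ + z ≠ 0 := fun h => hz' (by linarith)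
      have h1 := hcubic z hz'
      rw [hψ z hz'] at h1
      simp only
      rw [h1]
      field_simp
      ring
    have := Continuous.ext_on (dense_compl_singleton (-θ)) hcont1 hcont2 heq
    exact fun z => congrFun this z
  have hβprod : σ^2/2 * (β₁ * β₂) = θ * q := by linear_combination (-1 : ℝ) * hpoly 0
  have hθβprod : σ^2/2 * ((θ + β₁) * (θ + β₂) * (θ + 1)) = -(lam * θ) := by
    linear_combination (-1 : ℝ) * hpoly (-θ)
  have hσ2 : σ^2 ≠ 0 := by positivity
  have hθq : (0:ℝ) < θ * q := mul_pos hθ hq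
  have hlθ : (0:ℝ) < lam * θ := mul_pos hlam hθ
  have hβ1 : β₁ ≠ 0 := by intro h; rw [h] at hβprod; nlinarith
  have hβ2 : β₂ ≠ 0 := by intro h; rw [h] at hβprod; nlinarith
  have hθβ₁ : θ + β₁ ≠ 0 := by intro h; rw [h] at hθβprod; nlinarith
  have hθβ₂ : θ + β₂ ≠ 0 := by intro h; rw [h] at hθβprod; nlinarith
  have hθ1 : (0:ℝ) < θ + 1 := by linarith
  have hβ21 : β₂ - β₁ ≠ 0 := sub_ne_zero.mpr h12.ne'
  have hβ2lt : β₂ < 1 := h23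
  have hβ1lt : β₁ < 1 := lt_trans h12 hβ2lt
  have hb1ne : (1:ℝ) - β₁ ≠ 0 := sub_ne_zero.mpr (ne_of_gt hβ1lt)
  have hb2ne : (1:ℝ) - β₂ ≠ 0 := sub_ne_zero.mpr (ne_of_gt hβ2lt)
  intro x hx
  set s : ℝ := x - ystar with hsdef
  have hs0 : 0 < s := sub_pos.mpr hx
  set E : ℝ := C₁ * (Real.exp (β₁*s) - Real.exp (-(θ*s))) / (θ+β₁)
      + C₂ * (Real.exp (β₂*s) - Real.exp (-(θ*s))) / (θ+β₂)
      + C₃ * (Real.exp (1*s) - Real.exp (-(θ*s))) / (θ+1) with hE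
  -- inner integral computation for the W-integral
  have hcore : ∀ t : ℝ, (∫ u in Set.Iio t, W (s - t + u) * Real.exp (θ*u))
      = E * Real.exp (θ*t) := by
    intro t
    have hts : t - s ≤ t := by linarith
    have hsplit : Set.Iio t = Set.Iio (t-s) ∪ Set.Ico (t-s) t :=
      (Set.Iio_union_Ico_eq_Iio hts).symm
    have hzero : Set.EqOn (fun u => W (s - t + u) * Real.exp (θ*u)) (fun _ => (0:ℝ))
        (Set.Iio (t-s)) := by
      intro u hu
      have h1 : ¬ (0 ≤ s - t + u) := by simp only [Set.mem_Iio] at hu; push_neg; linarith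
      simp only [hW, if_neg h1, zero_mul]
    have hfeq : Set.EqOn (fun u => W (s - t + u) * Real.exp (θ*u))
        (fun u => (C₁ * Real.exp (β₁*(s-t+u)) + C₂ * Real.exp (β₂*(s-t+u))
          + C₃ * Real.exp (1*(s-t+u))) * Real.exp (θ*u)) (Set.Ico (t-s) t) := by
      intro u hu
      have h1 : 0 ≤ s - t + u := by
        simp only [Set.mem_Ico] at hu; linarith [hu.1]
      simp only [hW, if_pos h1]
    have hφc : Continuous (fun u => (C₁ * Real.exp (β₁*(s-t+u)) + C₂ * Real.exp (β₂*(s-t+u))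
          + C₃ * Real.exp (1*(s-t+u))) * Real.exp (θ*u)) := by fun_prop
    have hdisj : Disjoint (Set.Iio (t-s)) (Set.Ico (t-s) t) :=
      (Set.Iio_disjoint_Ici le_rfl).mono_right Set.Ico_subset_Ici_self
    have hint1 : IntegrableOn (fun u => W (s - t + u) * Real.exp (θ*u)) (Set.Iio (t-s)) :=
      (integrableOn_zero).congr_fun (fun u hu => (hzero hu).symm) measurableSet_Iio
    have hint2 : IntegrableOn (fun u => W (s - t + u) * Real.exp (θ*u)) (Set.Ico (t-s) t) :=
      ((hφc.integrableOn_Icc).mono_set Set.Ico_subset_Icc_self).congr_fun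
        (fun u hu => (hfeq hu).symm) measurableSet_Ico
    rw [hsplit, setIntegral_union hdisj measurableSet_Ico hint1 hint2]
    rw [setIntegral_congr_fun measurableSet_Iio hzero, integral_zero, zero_add]
    rw [setIntegral_congr_fun measurableSet_Ico hfeq]
    rw [integral_Ico_eq_integral_Ioo, ← integral_Ioc_eq_integral_Ioo, ← intervalIntegral.integral_of_le hts]
    have hexpand : ∀ u : ℝ, (C₁ * Real.exp (β₁*(s-t+u)) + C₂ * Real.exp (β₂*(s-t+u))
          + C₃ * Real.exp (1*(s-t+u))) * Real.exp (θ*u)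
        = C₁ * Real.exp (β₁*(s-t)) * Real.exp ((β₁+θ)*u)
          + C₂ * Real.exp (β₂*(s-t)) * Real.exp ((β₂+θ)*u)
          + C₃ * Real.exp (1*(s-t)) * Real.exp ((1+θ)*u) := by
      intro u
      rw [show β₁*(s-t+u) = β₁*(s-t) + β₁*u by ring, show β₂*(s-t+u) = β₂*(s-t) + β₂*u by ring,
        show 1*(s-t+u) = 1*(s-t) + 1*u by ring, show (β₁+θ)*u = β₁*u + θ*u by ring,
        show (β₂+θ)*u = β₂*u + θ*u by ring, show (1+θ)*u = 1*u + θ*u by ring]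
      simp only [Real.exp_add]
      ring
    simp only [hexpand]
    have hβ1θ : β₁ + θ ≠ 0 := by intro h; exact hθβ₁ (by linarith)
    have hβ2θ : β₂ + θ ≠ 0 := by intro h; exact hθβ₂ (by linarith)
    have h1θ : (1:ℝ) + θ ≠ 0 := by linarith
    rw [intervalIntegral.integral_add (((by fun_prop : Continuous (fun u : ℝ =>
          C₁ * Real.exp (β₁*(s-t)) * Real.exp ((β₁+θ)*u))).intervalIntegrable _ _).add
        ((by fun_prop : Continuous (fun u : ℝ =>
          C₂ * Real.exp (β₂*(s-t)) * Real.exp ((β₂+θ)*u))).intervalIntegrable _ _))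
      ((by fun_prop : Continuous (fun u : ℝ =>
          C₃ * Real.exp (1*(s-t)) * Real.exp ((1+θ)*u))).intervalIntegrable _ _),
      intervalIntegral.integral_add ((by fun_prop : Continuous (fun u : ℝ =>
          C₁ * Real.exp (β₁*(s-t)) * Real.exp ((β₁+θ)*u))).intervalIntegrable _ _)
        ((by fun_prop : Continuous (fun u : ℝ =>
          C₂ * Real.exp (β₂*(s-t)) * Real.exp ((β₂+θ)*u))).intervalIntegrable _ _)]
    rw [intervalIntegral.integral_const_mul, intervalIntegral.integral_const_mul,
      intervalIntegral.integral_const_mul]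
    rw [exp_integral_interval' _ _ hβ1θ, exp_integral_interval' _ _ hβ2θ,
      exp_integral_interval' _ _ h1θ]
    rw [hE]
    rw [show β₁*(s-t) = β₁*s - β₁*t by ring, show β₂*(s-t) = β₂*s - β₂*t by ring,
      show (1:ℝ)*(s-t) = 1*s - 1*t by ring,
      show (β₁+θ)*t = β₁*t + θ*t by ring, show (β₂+θ)*t = β₂*t + θ*t by ring,
      show ((1:ℝ)+θ)*t = 1*t + θ*t by ring,
      show (β₁+θ)*(t-s) = (β₁*t + θ*t) - (β₁*s + θ*s) by ring,
      show (β₂+θ)*(t-s) = (β₂*t + θ*t) - (β₂*s + θ*s) by ring,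
      show ((1:ℝ)+θ)*(t-s) = (1*t + θ*t) - (1*s + θ*s) by ring,
      show -(θ*s) = 0 - θ*s by ring]
    simp only [Real.exp_add, Real.exp_sub, Real.exp_zero]
    have e1 := Real.exp_ne_zero (β₁*t)
    have e2 := Real.exp_ne_zero (β₂*t)
    have e3 := Real.exp_ne_zero (1*t)
    have e4 := Real.exp_ne_zero (θ*t)
    have e5 := Real.exp_ne_zero (β₁*s)
    have e6 := Real.exp_ne_zero (β₂*s)
    have e7 := Real.exp_ne_zero (1*s)
    have e8 := Real.exp_ne_zero (θ*s)
    field_simp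
    ring
  have hinner : ∀ t : ℝ, (∫ u in Set.Iio t,
      (w (t+ystar) - δ) * W (s - t + u) * (lam*θ*Real.exp (θ*u)))
      = (lam*θ*E) * ((w (t+ystar) - δ) * Real.exp (θ*t)) := by
    intro t
    have h1 : ∀ u : ℝ, (w (t+ystar) - δ) * W (s - t + u) * (lam*θ*Real.exp (θ*u))
        = ((w (t+ystar) - δ) * (lam*θ)) * (W (s - t + u) * Real.exp (θ*u)) := by
      intro u; ring
    simp only [h1]
    rw [MeasureTheory.integral_const_mul, hcore t]
    ring
  have hinner2 : ∀ t : ℝ, (∫ u in Set.Iio t,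
      (w (t+ystar) - δ) * Real.exp (-(t-u)) * (lam*θ*Real.exp (θ*u)))
      = (lam*θ/(θ+1)) * ((w (t+ystar) - δ) * Real.exp (θ*t)) := by
    intro t
    have h1 : ∀ u : ℝ, (w (t+ystar) - δ) * Real.exp (-(t-u)) * (lam*θ*Real.exp (θ*u))
        = ((w (t+ystar) - δ) * (lam*θ) * Real.exp (-t)) * Real.exp ((θ+1)*u) := by
      intro u
      rw [show -(t-u) = -t + u by ring, show (θ+1)*u = θ*u + u by ring]
      simp only [Real.exp_add]
      ring
    simp only [h1]
    rw [MeasureTheory.integral_const_mul, exp_integral_Iio' t hθ1]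
    rw [show (θ+1)*t = θ*t + t by ring, Real.exp_add, Real.exp_neg]
    field_simp [Real.exp_ne_zero]
  set G : ℝ := ∫ t in Set.Iio (0:ℝ), (w (t + ystar) - δ) * Real.exp (θ*t) with hGdef
  have houter2 : (lam*θ/(θ+1)) * G = δ * q := by
    have h : (∫ t in Set.Iio (0:ℝ), ∫ u in Set.Iio t,
          (w (t + ystar) - δ) * Real.exp (-(t-u)) * (lam*θ*Real.exp (θ*u)))
        = ∫ t in Set.Iio (0:ℝ), (lam*θ/(θ+1)) * ((w (t+ystar) - δ) * Real.exp (θ*t)) :=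
      setIntegral_congr_fun measurableSet_Iio (fun t _ => hinner2 t)
    rw [h, MeasureTheory.integral_const_mul] at hyeq
    exact hyeq
  have hgoal1 : (∫ t in Set.Iio (0:ℝ), ∫ u in Set.Iio t,
      (w (t + ystar) - δ) * W (s - t + u) * (lam*θ*Real.exp (θ*u))) = (lam*θ*E) * G := by
    have h : (∫ t in Set.Iio (0:ℝ), ∫ u in Set.Iio t,
          (w (t + ystar) - δ) * W (s - t + u) * (lam*θ*Real.exp (θ*u)))
        = ∫ t in Set.Iio (0:ℝ), (lam*θ*E) * ((w (t+ystar) - δ) * Real.exp (θ*t)) :=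
      setIntegral_congr_fun measurableSet_Iio (fun t _ => hinner t)
    rw [h, MeasureTheory.integral_const_mul]
  rw [hgoal1, hZ s, if_pos hs0.le]
  have hlG : lam*θ*G = δ*q*(θ+1) := by
    field_simp at houter2
    linear_combination houter2
  have hEG : lam*θ*E*G = E * (δ*q*(θ+1)) := by
    calc lam*θ*E*G = E*(lam*θ*G) := by ring
    _ = E*(δ*q*(θ+1)) := by rw [hlG]
  rw [hEG]
  have hqv : q = σ^2/2*(β₁*β₂)/θ := by
    rw [eq_div_iff hθ.ne']; linarith [hβprod]
  have hb1ne' : β₁ - 1 ≠ 0 := sub_ne_zero.mpr (ne_of_lt hβ1lt)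
  have hb2ne' : β₂ - 1 ≠ 0 := sub_ne_zero.mpr (ne_of_lt hβ2lt)
  have hb1' : β₁-1 ≠ 0 := fun h => hb1ne (by linarith)
  have hb2' : β₂-1 ≠ 0 := fun h => hb2ne (by linarith)
  have hb12' : β₁-β₂ ≠ 0 := fun h => hβ21 (by linarith)
  have k1 : q*(C₁/β₁) - C₁/(θ+β₁)*(q*(θ+1)) = β₂/(β₂-β₁) := by
    rw [hC₁, hqv]; field_simp; ring
  have k2 : q*(C₂/β₂) - C₂/(θ+β₂)*(q*(θ+1)) = -β₁/(β₂-β₁) := by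
    rw [hC₂, hqv]; field_simp; ring
  have k3 : C₁/(θ+β₁) + C₂/(θ+β₂) + C₃/(θ+1) = 0 := by
    rw [hC₁, hC₂, hC₃]; field_simp; ring
  have k4 : (θ+1)*(θ+1)⁻¹ = 1 := mul_inv_cancel₀ hθ1.ne'
  rw [hE]
  linear_combination (δ*Real.exp (β₁*s))*k1 + (δ*Real.exp (β₂*s))*k2
    + (δ*q*(θ+1)*Real.exp (-(θ*s)))*k3 - (δ*q*C₃*Real.exp (1*s))*k4
end
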